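/- arXiv:1112.1325 — 8 statements merged into one kernel-verified Lean document; each statement's English description precedes it below -/
import Mathlib

section
/- Let P be an m×m1 complex matrix (m = m1+m2) with P*P > 0 and P* j P ≥ 0, where j = diag(I_{m1}, -I_{m2}). Write P = [P1; P2] with P1 the upper m1×m1 block and P2 the lower m2×m1 block. Then P1 is invertible and P2 P1⁻¹ is non-expansive: (P2 P1⁻¹)* (P2 P1⁻¹) ≤ I_{m1}. -/
open Matrix
open scoped ComplexOrder

/-- If `P : ℂ^{m×m1}` satisfies `PᴴP > 0` and `Pᴴ j P ≥ 0` with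
`j = diag(I_{m1}, -I_{m2})`, then the top block `P1` is invertible and
`P2 P1⁻¹` is non-expansive. -/
theorem stmt_2 (m1 m2 : ℕ) (hm1 : 0 < m1) (hm2 : 0 < m2)
    (j : Matrix (Fin m1 ⊕ Fin m2) (Fin m1 ⊕ Fin m2) ℂ)
    (hj : j = Matrix.fromBlocks 1 0 0 (-1))
    (P : Matrix (Fin m1 ⊕ Fin m2) (Fin m1) ℂ)
    (hP : (Pᴴ * P).PosDef)
    (hPj : (Pᴴ * j * P).PosSemidef)
    (P1 : Matrix (Fin m1) (Fin m1) ℂ) (hP1 : P1 = P.submatrix Sum.inl id)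
    (P2 : Matrix (Fin m2) (Fin m1) ℂ) (hP2 : P2 = P.submatrix Sum.inr id) :
    IsUnit P1 ∧
      ((1 : Matrix (Fin m1) (Fin m1) ℂ) - (P2 * P1⁻¹)ᴴ * (P2 * P1⁻¹)).PosSemidef := by
  have hPeq : P = Matrix.fromRows P1 P2 := by
    subst hP1 hP2
    ext (i | i) k <;> rfl
  have hPH : Pᴴ = Matrix.fromCols P1ᴴ P2ᴴ := by
    rw [hPeq, conjTranspose_fromRows_eq_fromCols_conjTranspose]
  have keyj : Pᴴ * j * P = P1ᴴ * P1 - P2ᴴ * P2 := by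
    rw [hj, hPH, hPeq, Matrix.mul_assoc, fromBlocks_mul_fromRows,
      fromCols_mul_fromRows]
    simp [sub_eq_add_neg]
  have keyP : Pᴴ * P = P1ᴴ * P1 + P2ᴴ * P2 := by
    rw [hPH, hPeq, fromCols_mul_fromRows]
  -- P1ᴴ * P1 is positive definite
  have hP1d : (P1ᴴ * P1).PosDef := by
    refine .of_dotProduct_mulVec_pos (Matrix.isHermitian_conjTranspose_mul_self P1) fun x hx => ?_
    have h1 : 0 < star x ⬝ᵥ ((Pᴴ * P) *ᵥ x) := hP.dotProduct_mulVec_pos hx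
    have h2 : 0 ≤ star x ⬝ᵥ ((Pᴴ * j * P) *ᵥ x) := hPj.dotProduct_mulVec_nonneg x
    have hsum : star x ⬝ᵥ ((Pᴴ * P) *ᵥ x) + star x ⬝ᵥ ((Pᴴ * j * P) *ᵥ x)
        = 2 * (star x ⬝ᵥ ((P1ᴴ * P1) *ᵥ x)) := by
      rw [keyj, keyP]
      simp only [Matrix.add_mulVec, Matrix.sub_mulVec, dotProduct_add,
        dotProduct_sub]
      ring
    have : 0 < 2 * (star x ⬝ᵥ ((P1ᴴ * P1) *ᵥ x)) := by
      rw [← hsum]; exact add_pos_of_pos_of_nonneg h1 h2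
    have := mul_pos (show (0:ℂ) < 2⁻¹ by
      rw [show ((2:ℂ))⁻¹ = ((2⁻¹ : ℝ) : ℂ) by push_cast; ring, Complex.zero_lt_real]
      norm_num) this
    rwa [← mul_assoc, inv_mul_cancel₀ two_ne_zero, one_mul] at this
  have hU : IsUnit P1 := by
    have hdet : IsUnit (P1ᴴ.det * P1.det) := by
      rw [← Matrix.det_mul]
      exact (Matrix.isUnit_iff_isUnit_det _).1 hP1d.isUnit
    exact (Matrix.isUnit_iff_isUnit_det P1).2 (isUnit_of_mul_isUnit_right hdet)
  refine ⟨hU, ?_⟩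
  have hinv : P1 * P1⁻¹ = 1 := Matrix.mul_nonsing_inv P1 ((Matrix.isUnit_iff_isUnit_det P1).1 hU)
  have : (1 : Matrix (Fin m1) (Fin m1) ℂ) - (P2 * P1⁻¹)ᴴ * (P2 * P1⁻¹)
      = (P1⁻¹)ᴴ * (Pᴴ * j * P) * P1⁻¹ := by
    rw [keyj]
    simp only [Matrix.mul_sub, Matrix.sub_mul, Matrix.conjTranspose_mul,
      Matrix.mul_assoc]
    rw [hinv, Matrix.mul_one, ← Matrix.conjTranspose_mul, hinv,
      Matrix.conjTranspose_one]
  rw [this]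
  exact hPj.conjTranspose_mul_mul_same P1⁻¹
end

section
/- Let u be an invertible m×m matrix with (u*)⁻¹ j u⁻¹ ≥ j, where j = diag(I_{m1}, -I_{m2}), and let P be an m×m1 matrix with P*P > 0 and P* j P ≥ 0. Then the upper m1×m1 block [I_{m1} 0] u⁻¹ P of u⁻¹P is invertible. -/
open Matrix
open scoped ComplexOrder

/-- If `u` is invertible with `(uᴴ)⁻¹ j u⁻¹ ≥ j` and `P` satisfies `PᴴP > 0`,
`Pᴴ j P ≥ 0`, then the top `m1 × m1` block of `u⁻¹ P` is invertible. -/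
theorem stmt_3 (m1 m2 : ℕ)
    (j : Matrix (Fin m1 ⊕ Fin m2) (Fin m1 ⊕ Fin m2) ℂ)
    (hj : j = Matrix.fromBlocks 1 0 0 (-1))
    (u : Matrix (Fin m1 ⊕ Fin m2) (Fin m1 ⊕ Fin m2) ℂ)
    (hu : IsUnit u)
    (h : ((uᴴ)⁻¹ * j * u⁻¹ - j).PosSemidef)
    (P : Matrix (Fin m1 ⊕ Fin m2) (Fin m1) ℂ)
    (hP : (Pᴴ * P).PosDef)
    (hPj : (Pᴴ * j * P).PosSemidef) :
    IsUnit ((u⁻¹ * P).submatrix Sum.inl (id : Fin m1 → Fin m1)) := by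
  set Q := u⁻¹ * P with hQdef
  have hudet : IsUnit u.det := (Matrix.isUnit_iff_isUnit_det u).mp hu
  -- Qᴴ j Q is PSD
  have hkey : Qᴴ * j * Q = Pᴴ * ((uᴴ)⁻¹ * j * u⁻¹ - j) * P + Pᴴ * j * P := by
    rw [hQdef, Matrix.conjTranspose_mul, Matrix.conjTranspose_nonsing_inv, Matrix.mul_sub, Matrix.sub_mul,
      sub_add_cancel]
    simp only [Matrix.mul_assoc]
  have hQpsd : (Qᴴ * j * Q).PosSemidef := by
    rw [hkey]
    exact (h.conjTranspose_mul_mul_same P).add (hPj)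
  rw [← Matrix.mulVec_injective_iff_isUnit]
  set A := Q.submatrix Sum.inl (id : Fin m1 → Fin m1) with hAdef
  rw [← Matrix.coe_mulVecLin, injective_iff_map_eq_zero]
  intro x hx
  set y := Q *ᵥ x with hydef
  have hyl : ∀ i, y (Sum.inl i) = 0 := fun i => congrFun hx i
  have h0 : 0 ≤ star x ⬝ᵥ ((Qᴴ * j * Q) *ᵥ x) := hQpsd.dotProduct_mulVec_nonneg x
  have heq : star x ⬝ᵥ ((Qᴴ * j * Q) *ᵥ x) = star y ⬝ᵥ (j *ᵥ y) := by
    rw [← Matrix.mulVec_mulVec, ← Matrix.mulVec_mulVec, Matrix.dotProduct_mulVec,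
      ← Matrix.star_mulVec]
  have hval : star y ⬝ᵥ (j *ᵥ y) = - ∑ i, star (y (Sum.inr i)) * y (Sum.inr i) := by
    subst hj
    simp [dotProduct, Matrix.mulVec, Fintype.sum_sum_type, Matrix.fromBlocks,
      Matrix.one_apply, Finset.mul_sum, hyl, Finset.sum_ite_eq, mul_comm]
  have hsum : ∑ i, star (y (Sum.inr i)) * y (Sum.inr i) = 0 := by
    refine le_antisymm ?_ (Finset.sum_nonneg fun i _ => star_mul_self_nonneg _)
    rw [← neg_nonneg, ← hval, ← heq]
    exact h0
  have hyr : ∀ i, y (Sum.inr i) = 0 := by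
    intro i
    have := (Finset.sum_eq_zero_iff_of_nonneg
      (fun i _ => star_mul_self_nonneg (y (Sum.inr i)))).mp hsum i (Finset.mem_univ i)
    have h2 : (Complex.normSq (y (Sum.inr i)) : ℂ) = 0 := by
      rw [Complex.normSq_eq_conj_mul_self]; exact this
    exact Complex.normSq_eq_zero.mp (by exact_mod_cast h2)
  have hy : y = 0 := funext fun k => by cases k with
    | inl i => exact hyl i
    | inr i => exact hyr i
  have hPx : P *ᵥ x = 0 := by
    have hPQ : P = u * Q := by
      rw [hQdef, Matrix.mul_nonsing_inv_cancel_left _ _ hudet]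
    rw [hPQ, ← Matrix.mulVec_mulVec, ← hydef, hy, Matrix.mulVec_zero]
  by_contra hx0
  have hlt := hP.dotProduct_mulVec_pos hx0
  have : star x ⬝ᵥ ((Pᴴ * P) *ᵥ x) = 0 := by
    rw [← Matrix.mulVec_mulVec, Matrix.dotProduct_mulVec, ← Matrix.star_mulVec, hPx]
    simp
  rw [this] at hlt
  exact lt_irrefl _ hlt
end

section
/- Let 𝔄 be a Hermitian m×m matrix with blocks 𝔄11, 𝔄12, 𝔄21 = 𝔄12*, 𝔄22, where -𝔄22 is positive definite. Then for an m2×m1 matrix φ̂, the inequality [I φ̂*] 𝔄 [I; φ̂] ≥ 0 holds if and only if there exists an m2×m1 non-expansive matrix ω (ω*ω ≤ I_{m1}) such that φ̂ = ρ_l ω ρ_r - 𝔄22⁻¹ 𝔄21, where ρ_l = (-𝔄22)^{-1/2} and ρ_r = (𝔄11 - 𝔄12 𝔄22⁻¹ 𝔄21)^{1/2}. -/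
open Matrix
open scoped ComplexOrder

noncomputable def Matrix.PosSemidef.sqrt {n 𝕜 : Type*} [Fintype n] [DecidableEq n] [RCLike 𝕜]
    {A : Matrix n n 𝕜} (hA : A.PosSemidef) : Matrix n n 𝕜 :=
  (hA.1.eigenvectorUnitary : Matrix n n 𝕜) * diagonal ((↑) ∘ (√·) ∘ hA.1.eigenvalues) *
    (star hA.1.eigenvectorUnitary : Matrix n n 𝕜)

theorem Matrix.PosSemidef.posSemidef_sqrt {n 𝕜 : Type*} [Fintype n] [DecidableEq n] [RCLike 𝕜]
    {A : Matrix n n 𝕜} (hA : A.PosSemidef) : hA.sqrt.PosSemidef := by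
  unfold Matrix.PosSemidef.sqrt
  rw [Matrix.star_eq_conjTranspose]
  apply Matrix.PosSemidef.mul_mul_conjTranspose_same
  refine Matrix.posSemidef_diagonal_iff.mpr fun i => ?_
  simp only [Function.comp_apply]
  exact RCLike.ofReal_nonneg.mpr (Real.sqrt_nonneg _)

theorem Matrix.PosSemidef.sqrt_mul_self {n 𝕜 : Type*} [Fintype n] [DecidableEq n] [RCLike 𝕜]
    {A : Matrix n n 𝕜} (hA : A.PosSemidef) : hA.sqrt * hA.sqrt = A := by
  unfold Matrix.PosSemidef.sqrt
  have hUU : star (hA.1.eigenvectorUnitary : Matrix n n 𝕜) * (hA.1.eigenvectorUnitary : Matrix n n 𝕜) = 1 :=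
    Matrix.mem_unitaryGroup_iff'.mp hA.1.eigenvectorUnitary.2
  calc _ = (hA.1.eigenvectorUnitary : Matrix n n 𝕜) *
        (diagonal ((↑) ∘ (√·) ∘ hA.1.eigenvalues) * diagonal ((↑) ∘ (√·) ∘ hA.1.eigenvalues)) *
        star (hA.1.eigenvectorUnitary : Matrix n n 𝕜) := by
        simp only [Matrix.mul_assoc]
        rw [← Matrix.mul_assoc (star _) (hA.1.eigenvectorUnitary : Matrix n n 𝕜), hUU, Matrix.one_mul]
    _ = A := by
        rw [diagonal_mul_diagonal]
        simp only [Function.comp_apply, ← RCLike.ofReal_mul,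
          fun i => Real.mul_self_sqrt (hA.eigenvalues_nonneg i)]
        exact hA.1.spectral_theorem.symm

private lemma douglas {n m : ℕ} {ρ : Matrix (Fin n) (Fin n) ℂ} (hρ : ρ.PosSemidef)
    (θ : Matrix (Fin m) (Fin n) ℂ) (h : (ρ * ρ - θᴴ * θ).PosSemidef) :
    ∃ ω : Matrix (Fin m) (Fin n) ℂ,
      ((1 : Matrix (Fin n) (Fin n) ℂ) - ωᴴ * ω).PosSemidef ∧ θ = ω * ρ := by
  have hev := hρ.eigenvalues_nonneg
  obtain ⟨hH, -⟩ := hρ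
  set U : Matrix (Fin n) (Fin n) ℂ := ↑(hH.eigenvectorUnitary) with hUdef
  set d : Fin n → ℂ := RCLike.ofReal ∘ hH.eigenvalues with hddef
  have hUU : star U * U = 1 := Matrix.mem_unitaryGroup_iff'.mp hH.eigenvectorUnitary.2
  have hUU' : U * star U = 1 := Matrix.mem_unitaryGroup_iff.mp hH.eigenvectorUnitary.2
  have hspec : ρ = U * diagonal d * star U := hH.spectral_theorem
  have key : ∀ X : Matrix (Fin n) (Fin n) ℂ, star U * (U * X) = X := by
    intro X; rw [← Matrix.mul_assoc, hUU, Matrix.one_mul]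
  have hmul : ∀ a b : Fin n → ℂ,
      (U * diagonal a * star U) * (U * diagonal b * star U)
        = U * diagonal (fun i => a i * b i) * star U := by
    intro a b
    simp only [Matrix.mul_assoc, key]
    rw [← Matrix.mul_assoc (diagonal a), diagonal_mul_diagonal]
  set g : Fin n → ℂ := fun i => if hH.eigenvalues i = 0 then 0 else (d i)⁻¹ with hgdef
  set p : Fin n → ℂ := fun i => if hH.eigenvalues i = 0 then 0 else 1 with hpdef
  have hdne : ∀ i, hH.eigenvalues i ≠ 0 → d i ≠ 0 := by
    intro i hi
    simpa [hddef] using fun hc => hi (by exact_mod_cast hc)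
  have hgd : ∀ i, g i * d i = p i := by
    intro i
    by_cases hi : hH.eigenvalues i = 0
    · simp [hgdef, hpdef, hi]
    · simp [hgdef, hpdef, hi, inv_mul_cancel₀ (hdne i hi)]
  set C : Matrix (Fin n) (Fin n) ℂ := U * diagonal g * star U with hCdef
  -- columns of U with zero eigenvalue are killed by θ
  have hcol : ∀ j, hH.eigenvalues j = 0 → ∀ i, (θ * U) i j = 0 := by
    intro j hj i
    set v : Fin n → ℂ := fun k => U k j with hvdef
    have hρU : ρ * U = U * diagonal d := by
      rw [hspec, Matrix.mul_assoc, hUU, Matrix.mul_one]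
    have hρv : ρ *ᵥ v = 0 := by
      funext k
      have : (ρ * U) k j = (U * diagonal d) k j := by rw [hρU]
      rw [Matrix.mul_apply, Matrix.mul_diagonal] at this
      simpa [Matrix.mulVec, dotProduct, hvdef, hddef, hj] using this
    have h1 := h.dotProduct_mulVec_nonneg v
    have h2 : star v ⬝ᵥ (ρ * ρ - θᴴ * θ) *ᵥ v
        = - (star (θ *ᵥ v) ⬝ᵥ (θ *ᵥ v)) := by
      rw [Matrix.sub_mulVec, dotProduct_sub, ← Matrix.mulVec_mulVec, hρv,
        Matrix.mulVec_zero, dotProduct_zero, ← Matrix.mulVec_mulVec,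
        Matrix.dotProduct_mulVec, Matrix.vecMul_conjTranspose, star_star, zero_sub]
    rw [h2] at h1
    have h3 : star (θ *ᵥ v) ⬝ᵥ (θ *ᵥ v) = 0 :=
      le_antisymm (by simpa using neg_nonneg.mp (by simpa using h1))
        (dotProduct_star_self_nonneg _)
    have h4 : θ *ᵥ v = 0 := dotProduct_star_self_eq_zero.mp h3
    have := congrFun h4 i
    simpa [Matrix.mul_apply, Matrix.mulVec, dotProduct, hvdef] using this
  refine ⟨θ * C, ?_, ?_⟩
  · -- non-expansive
    have hCH : Cᴴ = C := by
      rw [hCdef, Matrix.conjTranspose_mul, Matrix.conjTranspose_mul,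
        Matrix.diagonal_conjTranspose, Matrix.star_eq_conjTranspose,
        Matrix.conjTranspose_conjTranspose]
      have : star g = g := by
        funext i
        by_cases hi : hH.eigenvalues i = 0 <;>
          simp [hgdef, hi, hddef, Pi.star_apply, ← Complex.ofReal_inv]
      rw [this, Matrix.mul_assoc]
    have hkey : (1 : Matrix (Fin n) (Fin n) ℂ) - (θ * C)ᴴ * (θ * C)
        = (1 - C * (ρ * ρ) * C) + Cᴴ * (ρ * ρ - θᴴ * θ) * C := by
      rw [Matrix.conjTranspose_mul, hCH]
      noncomm_ring
      simp [Matrix.mul_assoc]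
    rw [hkey]
    apply Matrix.PosSemidef.add
    · have hρρ : ρ * ρ = U * diagonal (fun i => d i * d i) * star U := by
        rw [hspec, hmul]
      have hfun : (fun i => g i * (d i * d i) * g i) = p := by
        funext i
        by_cases hi : hH.eigenvalues i = 0
        · simp [hgdef, hpdef, hi]
        · rw [show g i * (d i * d i) * g i = (g i * d i) * (g i * d i) by ring, hgd]
          simp [hpdef, hi]
      have hCρρC : C * (ρ * ρ) * C = U * diagonal p * star U := by
        rw [hρρ, hCdef, hmul, hmul, hfun]
      have hone : (1 : Matrix (Fin n) (Fin n) ℂ)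
          = U * diagonal (fun _ => (1:ℂ)) * star U := by
        rw [diagonal_one, Matrix.mul_one, hUU']
      have : (1 : Matrix (Fin n) (Fin n) ℂ) - C * (ρ * ρ) * C
          = U * diagonal (fun i => 1 - p i) * star U := by
        rw [hCρρC, hone]
        rw [← Matrix.sub_mul, ← Matrix.mul_sub, diagonal_sub]
      rw [this, Matrix.star_eq_conjTranspose]
      apply Matrix.PosSemidef.mul_mul_conjTranspose_same
      refine Matrix.posSemidef_diagonal_iff.mpr fun i => ?_
      by_cases hi : hH.eigenvalues i = 0 <;> simp [hpdef, hi]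
    · exact h.conjTranspose_mul_mul_same C
  · -- θ = (θ * C) * ρ
    have hCρ : C * ρ = U * diagonal p * star U := by
      rw [hspec, hCdef, hmul, funext hgd]
    have hθUp : θ * U * diagonal p = θ * U := by
      ext i j
      rw [Matrix.mul_diagonal]
      by_cases hj : hH.eigenvalues j = 0
      · simp [hcol j hj i, hpdef, hj]
      · simp [hpdef, hj]
    calc θ = θ * U * star U := by rw [Matrix.mul_assoc, hUU', Matrix.mul_one]
    _ = θ * U * diagonal p * star U := by rw [hθUp]
    _ = θ * (U * diagonal p * star U) := by simp [Matrix.mul_assoc]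
    _ = θ * C * ρ := by rw [← hCρ]; simp [Matrix.mul_assoc]

/-- Matrix-ball description: `[I φ̂ᴴ] 𝔄 [I; φ̂] ≥ 0` holds iff
`φ̂ = ρ_l ω ρ_r - 𝔄₂₂⁻¹ 𝔄₂₁` for some non-expansive `ω`, where
`ρ_l = (-𝔄₂₂)^{-1/2}` and `ρ_r = (𝔄₁₁ - 𝔄₁₂ 𝔄₂₂⁻¹ 𝔄₂₁)^{1/2}`. -/
theorem stmt_4 (m1 m2 : ℕ)
    (A11 : Matrix (Fin m1) (Fin m1) ℂ) (A12 : Matrix (Fin m1) (Fin m2) ℂ)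
    (A21 : Matrix (Fin m2) (Fin m1) ℂ) (A22 : Matrix (Fin m2) (Fin m2) ℂ)
    (hA11 : A11.IsHermitian) (hA22 : A22.IsHermitian) (h12 : A12 = A21ᴴ)
    (hA22pos : (-A22).PosDef)
    (hSchur : (A11 - A12 * A22⁻¹ * A21).PosSemidef)
    (ρl : Matrix (Fin m2) (Fin m2) ℂ)
    (hρl : ρl = (hA22pos.inv.posSemidef).sqrt)
    (ρr : Matrix (Fin m1) (Fin m1) ℂ)
    (hρr : ρr = hSchur.sqrt)
    (φ : Matrix (Fin m2) (Fin m1) ℂ) :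
    (A11 + A12 * φ + φᴴ * A21 + φᴴ * A22 * φ).PosSemidef ↔
      ∃ ω : Matrix (Fin m2) (Fin m1) ℂ,
        ((1 : Matrix (Fin m1) (Fin m1) ℂ) - ωᴴ * ω).PosSemidef ∧
          φ = ρl * ω * ρr - A22⁻¹ * A21 := by
  -- invertibility facts
  have huneg : IsUnit (-A22).det := hA22pos.det_pos.ne'.isUnit
  have hu : IsUnit A22.det := by
    rw [Matrix.det_neg] at huneg
    exact (IsUnit.mul_iff.mp huneg).2
  have hinv : A22⁻¹ * A22 = 1 := Matrix.nonsing_inv_mul _ hu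
  have hinv' : A22 * A22⁻¹ = 1 := Matrix.mul_nonsing_inv _ hu
  -- ρl facts
  have hρlpsd : ρl.PosSemidef := hρl ▸ (hA22pos.inv.posSemidef).posSemidef_sqrt
  have hρl2 : ρl * ρl = (-A22)⁻¹ := hρl ▸ (hA22pos.inv.posSemidef).sqrt_mul_self
  have hρlu : IsUnit ρl.det := by
    have : ρl.det * ρl.det ≠ 0 := by
      rw [← Matrix.det_mul, hρl2]
      exact hA22pos.inv.det_pos.ne'
    exact ((mul_ne_zero_iff.mp this).1).isUnit
  have hρlinv : ρl⁻¹ * ρl = 1 := Matrix.nonsing_inv_mul _ hρlu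
  have hρlinv' : ρl * ρl⁻¹ = 1 := Matrix.mul_nonsing_inv _ hρlu
  set L : Matrix (Fin m2) (Fin m2) ℂ := ρl⁻¹ with hLdef
  have hLH : Lᴴ = L := by
    rw [hLdef, Matrix.conjTranspose_nonsing_inv, hρlpsd.1]
  have hL2 : L * L = -A22 := by
    rw [hLdef, ← Matrix.mul_inv_rev, hρl2, Matrix.nonsing_inv_nonsing_inv _ huneg]
  -- ρr facts
  set S : Matrix (Fin m1) (Fin m1) ℂ := A11 - A12 * A22⁻¹ * A21 with hSdef
  have hρrpsd : ρr.PosSemidef := hρr ▸ hSchur.posSemidef_sqrt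
  have hρr2 : ρr * ρr = S := hρr ▸ hSchur.sqrt_mul_self
  have hρrH : ρrᴴ = ρr := hρrpsd.1
  -- completion of the square
  set ψ : Matrix (Fin m2) (Fin m1) ℂ := φ + A22⁻¹ * A21 with hψdef
  set θ : Matrix (Fin m2) (Fin m1) ℂ := L * ψ with hθdef
  have hψH : ψᴴ = φᴴ + A12 * A22⁻¹ := by
    rw [hψdef, Matrix.conjTranspose_add, Matrix.conjTranspose_mul,
      Matrix.conjTranspose_nonsing_inv, hA22.eq, ← h12]
  have hθθ : θᴴ * θ = -(ψᴴ * A22 * ψ) := by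
    have e1 : θᴴ * θ = ψᴴ * (L * L) * ψ := by
      rw [hθdef, Matrix.conjTranspose_mul, hLH]
      simp [Matrix.mul_assoc]
    rw [e1, hL2]
    simp [Matrix.mul_neg, Matrix.neg_mul]
  have hψA : ψᴴ * A22 * ψ
      = φᴴ * A22 * φ + φᴴ * A21 + A12 * φ + A12 * (A22⁻¹ * A21) := by
    have c1 : ∀ X : Matrix (Fin m2) (Fin m1) ℂ, A22⁻¹ * (A22 * X) = X := by
      intro X; rw [← Matrix.mul_assoc, hinv, Matrix.one_mul]
    have c2 : ∀ X : Matrix (Fin m2) (Fin m1) ℂ, A22 * (A22⁻¹ * X) = X := by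
      intro X; rw [← Matrix.mul_assoc, hinv', Matrix.one_mul]
    rw [hψH, hψdef]
    simp only [Matrix.add_mul, Matrix.mul_add, Matrix.mul_assoc, c1, c2]
    abel
  have hmain : A11 + A12 * φ + φᴴ * A21 + φᴴ * A22 * φ = S - θᴴ * θ := by
    rw [hθθ, hψA, hSdef, Matrix.mul_assoc A12 A22⁻¹ A21]
    abel
  have hiff : ∀ ω : Matrix (Fin m2) (Fin m1) ℂ,
      (φ = ρl * ω * ρr - A22⁻¹ * A21 ↔ θ = ω * ρr) := by
    intro ω
    constructor
    · intro hφ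
      rw [hθdef, hψdef, hφ]
      rw [sub_add_cancel, ← Matrix.mul_assoc, ← Matrix.mul_assoc, hLdef, hρlinv,
        Matrix.one_mul]
    · intro hθω
      have : ψ = ρl * (ω * ρr) := by
        rw [← hθω, hθdef, ← Matrix.mul_assoc, hρlinv', Matrix.one_mul]
      rw [hψdef] at this
      rw [← Matrix.mul_assoc] at this
      exact by rw [← this]; abel
  rw [hmain]
  constructor
  · intro hpos
    have := douglas hρrpsd θ (by rwa [hρr2])
    obtain ⟨ω, hω, hθω⟩ := this
    exact ⟨ω, hω, (hiff ω).mpr hθω⟩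
  · rintro ⟨ω, hω, hφ⟩
    have hθω : θ = ω * ρr := (hiff ω).mp hφ
    have : S - θᴴ * θ = ρrᴴ * (1 - ωᴴ * ω) * ρr := by
      rw [hθω, Matrix.conjTranspose_mul, hρrH]
      rw [Matrix.mul_sub, Matrix.sub_mul, Matrix.mul_one, hρr2]
      simp [Matrix.mul_assoc]
    rw [this]
    exact hω.conjTranspose_mul_mul_same ρr
end

section
/- Under the setting of the Dirac system u' = (izj + jV)u with u(0,z) = I_m, ‖v(x)‖ ≤ M and Im z > M, the block 𝔄22(x,z) of 𝔄(x,z) = u(x,z)* j u(x,z) satisfies -𝔄22(x,z) ≥ (1 + 2(Im z - M)x) I_{m2} for all x ≥ 0. -/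
open Matrix
open scoped ComplexOrder Matrix.Norms.L2Operator

lemma aux_cs {m1 m2 : ℕ} {M : ℝ} (A : Matrix (Fin m1) (Fin m2) ℂ) (hA : ‖A‖ ≤ M)
    (a : Fin m1 → ℂ) (b : Fin m2 → ℂ) :
    2 * (star a ⬝ᵥ (A *ᵥ b)).re ≤ M * ((∑ i, ‖a i‖ ^ 2) + ∑ k, ‖b k‖ ^ 2) := by
  have hM : 0 ≤ M := le_trans (norm_nonneg _) hA
  set a' : EuclideanSpace ℂ (Fin m1) := (WithLp.equiv 2 _).symm a with ha'
  set b' : EuclideanSpace ℂ (Fin m2) := (WithLp.equiv 2 _).symm b with hb'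
  set w' : EuclideanSpace ℂ (Fin m1) := (EuclideanSpace.equiv (Fin m1) ℂ).symm (A *ᵥ b) with hw'
  have hs : star a ⬝ᵥ (A *ᵥ b) = inner ℂ a' w' := by
    rw [PiLp.inner_apply]
    simp only [dotProduct, ha', hw']
    simp [RCLike.inner_apply', Complex.star_def, mul_comm]
  have h1 : (star a ⬝ᵥ (A *ᵥ b)).re ≤ ‖a'‖ * ‖w'‖ := by
    calc (star a ⬝ᵥ (A *ᵥ b)).re = (inner ℂ a' w' : ℂ).re := by rw [hs]
    _ ≤ ‖(inner ℂ a' w' : ℂ)‖ := Complex.re_le_norm _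
    _ ≤ ‖a'‖ * ‖w'‖ := norm_inner_le_norm _ _
  have h2 : ‖w'‖ ≤ M * ‖b'‖ := by
    refine le_trans (A.l2_opNorm_mulVec b') ?_
    exact mul_le_mul_of_nonneg_right hA (norm_nonneg _)
  have hna : ‖a'‖ ^ 2 = ∑ i, ‖a i‖ ^ 2 := by
    rw [EuclideanSpace.norm_eq, Real.sq_sqrt (by positivity)]
    rfl
  have hnb : ‖b'‖ ^ 2 = ∑ k, ‖b k‖ ^ 2 := by
    rw [EuclideanSpace.norm_eq, Real.sq_sqrt (by positivity)]
    rfl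
  have key : 2 * (‖a'‖ * ‖b'‖) ≤ ‖a'‖ ^ 2 + ‖b'‖ ^ 2 := by
    have := two_mul_le_add_sq ‖a'‖ ‖b'‖; linarith
  have : (star a ⬝ᵥ (A *ᵥ b)).re ≤ M * (‖a'‖ * ‖b'‖) := by
    calc (star a ⬝ᵥ (A *ᵥ b)).re ≤ ‖a'‖ * ‖w'‖ := h1
    _ ≤ ‖a'‖ * (M * ‖b'‖) := mul_le_mul_of_nonneg_left h2 (norm_nonneg _)
    _ = M * (‖a'‖ * ‖b'‖) := by ring
  calc 2 * (star a ⬝ᵥ (A *ᵥ b)).re ≤ 2 * (M * (‖a'‖ * ‖b'‖)) := by linarith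
  _ = M * (2 * (‖a'‖ * ‖b'‖)) := by ring
  _ ≤ M * (‖a'‖ ^ 2 + ‖b'‖ ^ 2) := mul_le_mul_of_nonneg_left key hM
  _ = M * ((∑ i, ‖a i‖ ^ 2) + ∑ k, ‖b k‖ ^ 2) := by rw [hna, hnb]

lemma aux_deriv {n : Type*} [Fintype n] (j : Matrix n n ℂ) (y : ℝ → n → ℂ)
    (yd : n → ℂ) (x : ℝ) (hy : ∀ c, HasDerivAt (fun s => y s c) (yd c) x) :
    HasDerivAt (fun s => star (y s) ⬝ᵥ (j *ᵥ y s))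
      (star yd ⬝ᵥ (j *ᵥ y x) + star (y x) ⬝ᵥ (j *ᵥ yd)) x := by
  have key : ∀ s, star (y s) ⬝ᵥ (j *ᵥ y s)
      = ∑ c, ∑ d, star (y s c) * (j c d * y s d) := by
    intro s
    simp [dotProduct, mulVec, Finset.mul_sum]
  have keyd : star yd ⬝ᵥ (j *ᵥ y x) + star (y x) ⬝ᵥ (j *ᵥ yd)
      = ∑ c, ∑ d, (star (yd c) * (j c d * y x d) + star (y x c) * (j c d * yd d)) := by
    simp [dotProduct, mulVec, Finset.mul_sum, Finset.sum_add_distrib]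
  rw [funext key, keyd]
  refine HasDerivAt.fun_sum fun c _ => HasDerivAt.fun_sum fun d _ => ?_
  exact ((hy c).star).mul ((hy d).const_mul _)

lemma aux_jsplit {m1 m2 : ℕ} (w : Fin m1 ⊕ Fin m2 → ℂ) :
    ((Matrix.fromBlocks 1 0 0 (-1) : Matrix (Fin m1 ⊕ Fin m2) (Fin m1 ⊕ Fin m2) ℂ)) *ᵥ w
      = Sum.elim (w ∘ Sum.inl) (-(w ∘ Sum.inr)) := by
  rw [Matrix.fromBlocks_mulVec]
  simp [Matrix.neg_mulVec]

lemma aux_self {k : Type*} [Fintype k] (a : k → ℂ) :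
    star a ⬝ᵥ a = ((∑ i, ‖a i‖ ^ 2 : ℝ) : ℂ) := by
  push_cast
  simp [dotProduct, Complex.conj_mul']

/-- For the Dirac system `u' = (izj + jV)u`, `u(0,z) = I`, with `‖v(x)‖ ≤ M` and
`Im z > M`, the lower-right block of `𝔄(x) = u(x)ᴴ j u(x)` satisfies
`-𝔄₂₂(x) ≥ (1 + 2(Im z - M)x) I` for all `x ≥ 0`. -/
theorem stmt_6 (m1 m2 : ℕ) (M : ℝ)
    (v : ℝ → Matrix (Fin m1) (Fin m2) ℂ) (hv : Continuous v)
    (hvM : ∀ x, ‖v x‖ ≤ M)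
    (j : Matrix (Fin m1 ⊕ Fin m2) (Fin m1 ⊕ Fin m2) ℂ)
    (hj : j = Matrix.fromBlocks 1 0 0 (-1))
    (V : ℝ → Matrix (Fin m1 ⊕ Fin m2) (Fin m1 ⊕ Fin m2) ℂ)
    (hV : ∀ x, V x = Matrix.fromBlocks 0 (v x) (v x)ᴴ 0)
    (z : ℂ) (hz : M < z.im)
    (u : ℝ → Matrix (Fin m1 ⊕ Fin m2) (Fin m1 ⊕ Fin m2) ℂ)
    (hu0 : u 0 = 1)
    (hu : ∀ x a b, HasDerivAt (fun s => u s a b)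
      ((((Complex.I * z) • j + j * V x) * u x) a b) x)
    (𝔄 : ℝ → Matrix (Fin m1 ⊕ Fin m2) (Fin m1 ⊕ Fin m2) ℂ)
    (h𝔄 : ∀ x, 𝔄 x = (u x)ᴴ * j * u x) :
    ∀ x, 0 ≤ x →
      ((-(𝔄 x).toBlocks₂₂) -
        (((1 + 2 * (z.im - M) * x : ℝ) : ℂ)) • (1 : Matrix (Fin m2) (Fin m2) ℂ)).PosSemidef := by
  have hM : 0 ≤ M := le_trans (norm_nonneg (v 0)) (hvM 0)
  set c0 : ℝ := 2 * (z.im - M) with hc0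
  have hc0pos : 0 < c0 := by simp [hc0]; linarith
  have hjH : jᴴ = j := by
    rw [hj]; simp [Matrix.fromBlocks_conjTranspose]
  have hjj : j * j = 1 := by
    rw [hj]; simp [Matrix.fromBlocks_multiply, ← Matrix.fromBlocks_one]
  have h𝔄H : ∀ t, (𝔄 t)ᴴ = 𝔄 t := by
    intro t
    rw [h𝔄]
    simp [Matrix.conjTranspose_mul, hjH, Matrix.mul_assoc]
  intro x hx
  rw [Matrix.posSemidef_iff_dotProduct_mulVec]
  constructor
  · -- Hermitian
    show _ᴴ = _
    have h22 : ((𝔄 x).toBlocks₂₂)ᴴ = (𝔄 x).toBlocks₂₂ := by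
      ext i k
      have := congrFun (congrFun (h𝔄H x) (Sum.inr i)) (Sum.inr k)
      simp only [Matrix.conjTranspose_apply] at this ⊢
      simpa [Matrix.toBlocks₂₂] using this
    rw [Matrix.conjTranspose_sub, Matrix.conjTranspose_neg, h22]
    rw [Matrix.conjTranspose_smul, Matrix.conjTranspose_one, Complex.star_def,
      Complex.conj_ofReal]
  · -- positivity of the quadratic form
    intro η
    set ξ : Fin m1 ⊕ Fin m2 → ℂ := Sum.elim 0 η with hξ
    set y : ℝ → (Fin m1 ⊕ Fin m2) → ℂ := fun s => u s *ᵥ ξ with hy_def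
    set B : ℝ → Matrix (Fin m1 ⊕ Fin m2) (Fin m1 ⊕ Fin m2) ℂ :=
      fun t => (Complex.I * z) • j + j * V t with hB_def
    have hy : ∀ t c, HasDerivAt (fun s => y s c) ((B t *ᵥ y t) c) t := by
      intro t c
      have h1 : HasDerivAt (fun s => ∑ b, u s c b * ξ b) (∑ b, ((B t) * u t) c b * ξ b) t :=
        HasDerivAt.fun_sum fun b _ => (hu t c b).mul_const (ξ b)
      have e1 : (fun s => y s c) = fun s => ∑ b, u s c b * ξ b := by
        funext s; simp [hy_def, mulVec, dotProduct]
      have e2 : (B t *ᵥ y t) c = ∑ b, ((B t) * u t) c b * ξ b := by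
        have : B t *ᵥ y t = (B t * u t) *ᵥ ξ := by
          rw [hy_def]; exact Matrix.mulVec_mulVec ξ (B t) (u t)
        rw [this]; rfl
      rw [e1, e2]; exact h1
    set g : ℝ → ℂ := fun s => star (y s) ⬝ᵥ (j *ᵥ y s) with hg_def
    set f : ℝ → ℝ := fun s => (g s).re with hf_def
    have hgd : ∀ t, HasDerivAt g
        (star (B t *ᵥ y t) ⬝ᵥ (j *ᵥ y t) + star (y t) ⬝ᵥ (j *ᵥ (B t *ᵥ y t))) t :=
      fun t => aux_deriv j y (B t *ᵥ y t) t (hy t)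
    have hfd : ∀ t, HasDerivAt f
        ((star (B t *ᵥ y t) ⬝ᵥ (j *ᵥ y t) + star (y t) ⬝ᵥ (j *ᵥ (B t *ᵥ y t))).re) t :=
      fun t => (Complex.reCLM.hasFDerivAt.comp_hasDerivAt t (hgd t))
    set Nf : ℝ → ℝ := fun t => ∑ c, ‖y t c‖ ^ 2 with hNf_def
    have hgval : ∀ t, g t
        = (((∑ i, ‖y t (Sum.inl i)‖ ^ 2) - ∑ k, ‖y t (Sum.inr k)‖ ^ 2 : ℝ) : ℂ) := by
      intro t
      have h2 : star (y t) = Sum.elim (star (y t ∘ Sum.inl)) (star (y t ∘ Sum.inr)) := by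
        funext c; cases c <;> rfl
      rw [hg_def]
      simp only
      rw [hj, aux_jsplit, h2, sumElim_dotProduct_sumElim, dotProduct_neg,
        aux_self, aux_self]
      push_cast
      simp only [Function.comp_apply]
      ring
    have hfval : ∀ t, f t
        = (∑ i, ‖y t (Sum.inl i)‖ ^ 2) - ∑ k, ‖y t (Sum.inr k)‖ ^ 2 := by
      intro t
      rw [hf_def]
      simp only
      rw [hgval t, Complex.ofReal_re]
    have hNsum : ∀ t, Nf t
        = (∑ i, ‖y t (Sum.inl i)‖ ^ 2) + ∑ k, ‖y t (Sum.inr k)‖ ^ 2 := by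
      intro t
      rw [hNf_def]
      simp only
      rw [Fintype.sum_sum_type]
    have hNnn : ∀ t, 0 ≤ Nf t := by
      intro t; rw [hNf_def]; positivity
    have hflb : ∀ t, -Nf t ≤ f t := by
      intro t
      have h1 : (0:ℝ) ≤ ∑ i, ‖y t (Sum.inl i)‖ ^ 2 := by positivity
      rw [hfval t]
      rw [hNsum t]
      linarith
    -- derivative bound
    have hDb : ∀ t,
        (star (B t *ᵥ y t) ⬝ᵥ (j *ᵥ y t) + star (y t) ⬝ᵥ (j *ᵥ (B t *ᵥ y t))).re
          ≤ c0 * f t := by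
      intro t
      have hBv : B t *ᵥ y t = (Complex.I * z) • (j *ᵥ y t) + j *ᵥ (V t *ᵥ y t) := by
        rw [hB_def]
        simp only
        rw [Matrix.add_mulVec, Matrix.smul_mulVec, ← Matrix.mulVec_mulVec]
      have e1 : star (j *ᵥ y t) ⬝ᵥ (j *ᵥ y t) = star (y t) ⬝ᵥ y t := by
        rw [Matrix.star_mulVec, hjH, ← Matrix.dotProduct_mulVec, Matrix.mulVec_mulVec,
          hjj, Matrix.one_mulVec]
      have e2 : star (j *ᵥ (V t *ᵥ y t)) ⬝ᵥ (j *ᵥ y t) = star (V t *ᵥ y t) ⬝ᵥ y t := by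
        rw [Matrix.star_mulVec, hjH, ← Matrix.dotProduct_mulVec,
          Matrix.mulVec_mulVec (y t) j j, hjj, Matrix.one_mulVec]
      have e3 : j *ᵥ (j *ᵥ y t) = y t := by
        rw [Matrix.mulVec_mulVec, hjj, Matrix.one_mulVec]
      have e4 : j *ᵥ (j *ᵥ (V t *ᵥ y t)) = V t *ᵥ y t := by
        rw [Matrix.mulVec_mulVec, hjj, Matrix.one_mulVec]
      have hT : star (B t *ᵥ y t) ⬝ᵥ (j *ᵥ y t) + star (y t) ⬝ᵥ (j *ᵥ (B t *ᵥ y t))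
          = (starRingEnd ℂ) (Complex.I * z) * (star (y t) ⬝ᵥ y t)
            + star (V t *ᵥ y t) ⬝ᵥ y t
            + ((Complex.I * z) * (star (y t) ⬝ᵥ y t) + star (y t) ⬝ᵥ (V t *ᵥ y t)) := by
        rw [hBv, star_add, star_smul, add_dotProduct, smul_dotProduct, e1, e2,
          Matrix.mulVec_add, Matrix.mulVec_smul, e3, e4, dotProduct_add,
          dotProduct_smul]
        simp [smul_eq_mul]
      have e5 : star (V t *ᵥ y t) ⬝ᵥ y t = star (star (y t) ⬝ᵥ (V t *ᵥ y t)) :=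
        Matrix.star_dotProduct _ _
      have hNt : star (y t) ⬝ᵥ y t = ((Nf t : ℝ) : ℂ) := aux_self (y t)
      have hre : (star (B t *ᵥ y t) ⬝ᵥ (j *ᵥ y t) + star (y t) ⬝ᵥ (j *ᵥ (B t *ᵥ y t))).re
          = -2 * z.im * Nf t + 2 * (star (y t) ⬝ᵥ (V t *ᵥ y t)).re := by
        rw [hT, e5, hNt]
        simp [Complex.add_re, Complex.mul_re, Complex.mul_im, Complex.I_re, Complex.I_im]
        ring
      -- bound the V-term
      have hVw : V t *ᵥ y t
          = Sum.elim (v t *ᵥ (y t ∘ Sum.inr)) ((v t)ᴴ *ᵥ (y t ∘ Sum.inl)) := by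
        rw [hV, Matrix.fromBlocks_mulVec]
        simp
      have hsplit : star (y t) ⬝ᵥ (V t *ᵥ y t)
          = star (y t ∘ Sum.inl) ⬝ᵥ (v t *ᵥ (y t ∘ Sum.inr))
            + star (y t ∘ Sum.inr) ⬝ᵥ ((v t)ᴴ *ᵥ (y t ∘ Sum.inl)) := by
        have h2 : star (y t) = Sum.elim (star (y t ∘ Sum.inl)) (star (y t ∘ Sum.inr)) := by
          funext c; cases c <;> rfl
        rw [hVw, h2, sumElim_dotProduct_sumElim]
      have hconj : star (y t ∘ Sum.inr) ⬝ᵥ ((v t)ᴴ *ᵥ (y t ∘ Sum.inl))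
          = star (star (y t ∘ Sum.inl) ⬝ᵥ (v t *ᵥ (y t ∘ Sum.inr))) := by
        rw [Matrix.dotProduct_mulVec, ← Matrix.star_mulVec, Matrix.star_dotProduct]
      have hcs := aux_cs (v t) (hvM t) (y t ∘ Sum.inl) (y t ∘ Sum.inr)
      have hqre : (star (y t) ⬝ᵥ (V t *ᵥ y t)).re
          = 2 * ((star (y t ∘ Sum.inl)) ⬝ᵥ (v t *ᵥ (y t ∘ Sum.inr))).re := by
        rw [hsplit, hconj]
        simp [Complex.add_re]
        ring
      have hNs : Nf t = (∑ i, ‖(y t ∘ Sum.inl) i‖ ^ 2) + ∑ k, ‖(y t ∘ Sum.inr) k‖ ^ 2 :=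
        hNsum t
      have hqb : 2 * (star (y t) ⬝ᵥ (V t *ᵥ y t)).re ≤ 2 * M * Nf t := by
        rw [hqre, hNs]
        nlinarith [hcs]
      have hmul := mul_le_mul_of_nonneg_left (hflb t) (le_of_lt hc0pos)
      rw [hre]
      rw [hc0] at hmul ⊢
      nlinarith [hmul, hqb, hNnn t]
    -- Gronwall argument
    set h : ℝ → ℝ := fun t => f t * Real.exp (-c0 * t) with hh_def
    have hhd : ∀ t, HasDerivAt h
        (((star (B t *ᵥ y t) ⬝ᵥ (j *ᵥ y t) + star (y t) ⬝ᵥ (j *ᵥ (B t *ᵥ y t))).re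
          - c0 * f t) * Real.exp (-c0 * t)) t := by
      intro t
      have he : HasDerivAt (fun s => Real.exp (-c0 * s)) (Real.exp (-c0 * t) * (-c0 * 1)) t :=
        ((hasDerivAt_id t).const_mul (-c0)).exp
      have h2 := (hfd t).fun_mul he
      refine h2.congr_deriv ?_
      ring
    have hanti : Antitone h := by
      refine antitone_of_deriv_nonpos (fun t => (hhd t).differentiableAt) (fun t => ?_)
      rw [(hhd t).deriv]
      apply mul_nonpos_of_nonpos_of_nonneg
      · have := hDb t; linarith
      · exact (Real.exp_pos _).le
    have hy0 : y 0 = ξ := by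
      rw [hy_def]
      simp [hu0, Matrix.one_mulVec]
    have hf0 : f 0 = -∑ k, ‖η k‖ ^ 2 := by
      rw [hfval 0, hy0]
      simp [hξ]
    have hh0 : h 0 = -∑ k, ‖η k‖ ^ 2 := by
      rw [hh_def]
      simp [hf0]
    have hhx : h x ≤ h 0 := hanti hx
    set Nη : ℝ := ∑ k, ‖η k‖ ^ 2 with hNη_def
    have hNη0 : 0 ≤ Nη := by rw [hNη_def]; positivity
    have hfx : f x ≤ -(1 + c0 * x) * Nη := by
      have h2 : f x * Real.exp (-c0 * x) ≤ -Nη := by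
        rw [← hh0]; exact hhx
      have h3 : (f x * Real.exp (-c0 * x)) * Real.exp (c0 * x) ≤ -Nη * Real.exp (c0 * x) :=
        mul_le_mul_of_nonneg_right h2 (Real.exp_pos _).le
      have h4 : f x ≤ -Nη * Real.exp (c0 * x) := by
        calc f x = (f x * Real.exp (-c0 * x)) * Real.exp (c0 * x) := by
              rw [mul_assoc, ← Real.exp_add]; simp
        _ ≤ _ := h3
      have hexp : 1 + c0 * x ≤ Real.exp (c0 * x) := by
        have := Real.add_one_le_exp (c0 * x); linarith
      nlinarith [mul_le_mul_of_nonneg_left hexp hNη0]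
    -- translate to the quadratic form
    have hquad : star η ⬝ᵥ ((𝔄 x).toBlocks₂₂ *ᵥ η) = ((f x : ℝ) : ℂ) := by
      have stepa : star η ⬝ᵥ ((𝔄 x).toBlocks₂₂ *ᵥ η) = star ξ ⬝ᵥ (𝔄 x *ᵥ ξ) := by
        simp [dotProduct, mulVec, Fintype.sum_sum_type, Matrix.toBlocks₂₂, hξ]
      have stepb : star ξ ⬝ᵥ (𝔄 x *ᵥ ξ) = g x := by
        rw [h𝔄 x, ← Matrix.mulVec_mulVec, ← Matrix.mulVec_mulVec,
          Matrix.dotProduct_mulVec, ← Matrix.star_mulVec]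
      have stepc : g x = ((f x : ℝ) : ℂ) := by
        rw [hgval x, hfval x]
      rw [stepa, stepb, stepc]
    have hη : star η ⬝ᵥ η = ((Nη : ℝ) : ℂ) := aux_self η
    have hval : star η ⬝ᵥ (((-(𝔄 x).toBlocks₂₂)
          - (((1 + c0 * x : ℝ) : ℂ)) • (1 : Matrix (Fin m2) (Fin m2) ℂ)) *ᵥ η)
        = ((-f x - (1 + c0 * x) * Nη : ℝ) : ℂ) := by
      rw [Matrix.sub_mulVec, Matrix.neg_mulVec, Matrix.smul_mulVec, Matrix.one_mulVec,
        dotProduct_sub, dotProduct_neg, dotProduct_smul, hquad, hη,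
        smul_eq_mul]
      push_cast
      ring
    rw [hval]
    rw [Complex.zero_le_real]
    linarith
end

section
/- Let A = -i ∫₀ˣ · dt on L²_{m2}(0,l) and let Π = [Φ₁ Φ₂] : ℂ^{m1+m2} → L²_{m2}(0,l), where (Φ₁g)(x) = Φ₁(x)g for a bounded measurable m2×m1 matrix function Φ₁, and Φ₂g ≡ g. If S ∈ B(L²_{m2}(0,l)) is a bounded, self-adjoint, strictly positive, invertible operator satisfying AS - SA* = -i Π Π*, then the closed linear span of the images Im((A*)^i S⁻¹ Π), i = 0, 1, 2, ..., is all of L²_{m2}(0,l). -/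
open MeasureTheory ContinuousLinearMap
open scoped ComplexConjugate Polynomial

lemma poly_moment (l : ℝ) (hl : 0 < l) (φ : ℝ → ℂ)
    (hφ : MemLp φ 2 (volume.restrict (Set.Ioo 0 l)))
    (hmom : ∀ n : ℕ, ∫ x in Set.Ioo 0 l, (x:ℂ)^n * φ x = 0) :
    ∀ p : ℝ[X], ∫ x in Set.Ioo 0 l, ((p.eval x : ℝ):ℂ) * φ x = 0 := by
  set μ := volume.restrict (Set.Ioo 0 l) with hμdef
  haveI : IsFiniteMeasure μ := by
    constructor
    rw [hμdef, Measure.restrict_apply_univ]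
    simp [Real.volume_Ioo]
  have hφ1 : Integrable φ μ := hφ.integrable (by norm_num)
  have hmono : ∀ n : ℕ, Integrable (fun x : ℝ => (x:ℂ)^n * φ x) μ := by
    intro n
    refine Integrable.bdd_mul (c := (max l 1)^n) hφ1 ?_ ?_
    · exact (Complex.continuous_ofReal.pow n).aestronglyMeasurable
    · filter_upwards [ae_restrict_mem measurableSet_Ioo] with x hx
      simp only [norm_pow, Complex.norm_real]
      exact pow_le_pow_left₀ (abs_nonneg _)
        ((abs_of_pos hx.1).le.trans (le_max_of_le_left hx.2.le)) n
  intro p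
  have : (fun x => ((p.eval x : ℝ):ℂ) * φ x)
      = fun x : ℝ => ∑ n ∈ Finset.range (p.natDegree + 1), ((p.coeff n : ℝ):ℂ) * ((x:ℂ)^n * φ x) := by
    funext x
    rw [Polynomial.eval_eq_sum_range]
    push_cast
    rw [Finset.sum_mul]
    simp [mul_assoc]
  rw [this, integral_finset_sum]
  · refine Finset.sum_eq_zero fun n _ => ?_
    rw [integral_const_mul, hmom n, mul_zero]
  · exact fun n _ => (hmono n).const_mul _

lemma int_cont (l : ℝ) (φ : ℝ → ℂ)
    (hφ1 : Integrable φ (volume.restrict (Set.Ioo 0 l)))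
    (g : ℝ → ℝ) (hg : Continuous g) :
    Integrable (fun x : ℝ => ((g x:ℝ):ℂ) * φ x) (volume.restrict (Set.Ioo 0 l)) := by
  obtain ⟨M, hM⟩ := (isCompact_Icc (a := (0:ℝ)) (b := l)).exists_bound_of_continuousOn
    hg.continuousOn
  refine Integrable.bdd_mul (c := M) hφ1 ?_ ?_
  · exact (Complex.continuous_ofReal.comp hg).aestronglyMeasurable
  · filter_upwards [ae_restrict_mem measurableSet_Ioo] with x hx
    simpa using hM x (Set.mem_Icc_of_Ioo hx)


lemma cont_moment (l : ℝ) (hl : 0 < l) (φ : ℝ → ℂ)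
    (hφ : MemLp φ 2 (volume.restrict (Set.Ioo 0 l)))
    (hmom : ∀ n : ℕ, ∫ x in Set.Ioo 0 l, (x:ℂ)^n * φ x = 0)
    (χ : ℝ → ℝ) (hχ : Continuous χ) :
    ∫ x in Set.Ioo 0 l, ((χ x : ℝ):ℂ) * φ x = 0 := by
  set μ := volume.restrict (Set.Ioo 0 l) with hμdef
  haveI : IsFiniteMeasure μ := by
    constructor
    rw [hμdef, Measure.restrict_apply_univ]
    simp [Real.volume_Ioo]
  have hφ1 : Integrable φ μ := hφ.integrable (by norm_num)
  have hint : ∀ g : ℝ → ℝ, Continuous g → Integrable (fun x : ℝ => ((g x:ℝ):ℂ) * φ x) μ :=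
    fun g hg => int_cont l φ hφ1 g hg
  have key : ∀ ε : ℝ, 0 < ε →
      ‖∫ x, ((χ x:ℝ):ℂ) * φ x ∂μ‖ ≤ ε * (1 + ∫ x, ‖φ x‖ ∂μ) := by
    intro ε hε
    obtain ⟨p, hp⟩ := exists_polynomial_near_of_continuousOn 0 l χ hχ.continuousOn ε hε
    have hpz : ∫ x, ((p.eval x : ℝ):ℂ) * φ x ∂μ = 0 := poly_moment l hl φ hφ hmom p
    have hsub : (∫ x, ((χ x:ℝ):ℂ) * φ x ∂μ)
        = ∫ x, (((χ x - p.eval x : ℝ)):ℂ) * φ x ∂μ := by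
      rw [← sub_zero (∫ x, ((χ x:ℝ):ℂ) * φ x ∂μ), ← hpz,
        ← integral_sub (hint χ hχ) (hint _ p.continuous)]
      congr 1; funext x; push_cast; ring
    rw [hsub]
    calc ‖∫ x, (((χ x - p.eval x : ℝ)):ℂ) * φ x ∂μ‖
        ≤ ∫ x, ‖(((χ x - p.eval x : ℝ)):ℂ) * φ x‖ ∂μ := norm_integral_le_integral_norm _
      _ ≤ ∫ x, ε * ‖φ x‖ ∂μ := by
          refine integral_mono_ae ((hint _ (hχ.sub p.continuous)).norm) (hφ1.norm.const_mul ε) ?_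
          filter_upwards [ae_restrict_mem measurableSet_Ioo] with x hx
          rw [norm_mul, Complex.norm_real]
          refine mul_le_mul_of_nonneg_right ?_ (norm_nonneg _)
          rw [Real.norm_eq_abs, abs_sub_comm]
          exact (hp x (Set.mem_Icc_of_Ioo hx)).le
      _ = ε * ∫ x, ‖φ x‖ ∂μ := integral_const_mul ε _
      _ ≤ ε * (1 + ∫ x, ‖φ x‖ ∂μ) := by
          refine mul_le_mul_of_nonneg_left ?_ hε.le
          linarith [integral_nonneg (f := fun x => ‖φ x‖) (fun x => norm_nonneg (φ x)) (μ := μ)]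
  have hK : (0:ℝ) < 1 + ∫ x, ‖φ x‖ ∂μ := by
    linarith [integral_nonneg (f := fun x => ‖φ x‖) (fun x => norm_nonneg (φ x)) (μ := μ)]
  have : ‖∫ x, ((χ x:ℝ):ℂ) * φ x ∂μ‖ ≤ 0 := by
    refine le_of_forall_pos_le_add fun δ hδ => ?_
    rw [zero_add]
    calc ‖∫ x, ((χ x:ℝ):ℂ) * φ x ∂μ‖ ≤ (δ / (1 + ∫ x, ‖φ x‖ ∂μ)) * (1 + ∫ x, ‖φ x‖ ∂μ) :=
          key _ (div_pos hδ hK)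
      _ = δ := div_mul_cancel₀ δ hK.ne'
  exact norm_eq_zero.1 (le_antisymm this (norm_nonneg _))

lemma scalar_moment (l : ℝ) (hl : 0 < l) (φ : ℝ → ℂ)
    (hφ : MemLp φ 2 (volume.restrict (Set.Ioo 0 l)))
    (hmom : ∀ n : ℕ, ∫ x in Set.Ioo 0 l, (x:ℂ)^n * φ x = 0) :
    φ =ᵐ[volume.restrict (Set.Ioo 0 l)] 0 := by
  set μ := volume.restrict (Set.Ioo 0 l) with hμdef
  haveI : IsFiniteMeasure μ := by
    constructor
    rw [hμdef, Measure.restrict_apply_univ]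
    simp [Real.volume_Ioo]
  haveI : μ.WeaklyRegular := by
    rw [hμdef]
    exact Measure.WeaklyRegular.restrict_of_measure_ne_top (by simp [Real.volume_Ioo])
  have hφ1 : Integrable φ μ := hφ.integrable (by norm_num)
  set G : Lp ℂ 2 μ := hφ.toLp φ with hG
  have hdense : DenseRange (BoundedContinuousFunction.toLp (E := ℂ) 2 μ ℂ) :=
    BoundedContinuousFunction.toLp_denseRange (E := ℂ) (𝕜 := ℂ) (μ := μ) (by norm_num)
  have hzero : ∀ ψ : BoundedContinuousFunction ℝ ℂ,
      (inner ℂ G (BoundedContinuousFunction.toLp (E := ℂ) 2 μ ℂ ψ) : ℂ) = 0 := by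
    intro ψ
    have h1 : (inner ℂ (BoundedContinuousFunction.toLp (E := ℂ) 2 μ ℂ ψ) G : ℂ) = 0 := by
      rw [MeasureTheory.L2.inner_def]
      have hae : ∀ᵐ x ∂μ,
          (inner ℂ ((BoundedContinuousFunction.toLp (E := ℂ) 2 μ ℂ ψ : Lp ℂ 2 μ) x) (G x) : ℂ)
            = conj (ψ x) * φ x := by
        filter_upwards [BoundedContinuousFunction.coeFn_toLp (p := 2) (μ := μ) (𝕜 := ℂ) ψ,
          hφ.coeFn_toLp] with x h1 h2
        rw [h1, h2, RCLike.inner_apply, mul_comm]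
      rw [integral_congr_ae hae]
      have hsplit : (fun x => conj (ψ x) * φ x)
          = fun x : ℝ => ((((ψ x).re : ℝ):ℂ) * φ x) - Complex.I * ((((ψ x).im : ℝ):ℂ) * φ x) := by
        funext x
        have hc : conj (ψ x) = (((ψ x).re : ℝ):ℂ) - (((ψ x).im : ℝ):ℂ) * Complex.I := by
          apply Complex.ext <;> simp
        rw [hc]; ring
      have hre := cont_moment l hl φ hφ hmom (fun x => (ψ x).re)
        (Complex.continuous_re.comp ψ.continuous)
      have him := cont_moment l hl φ hφ hmom (fun x => (ψ x).im)
        (Complex.continuous_im.comp ψ.continuous)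
      have hintre := int_cont l φ hφ1 (fun x => (ψ x).re) (Complex.continuous_re.comp ψ.continuous)
      have hintim := int_cont l φ hφ1 (fun x => (ψ x).im) (Complex.continuous_im.comp ψ.continuous)
      rw [hsplit, integral_sub hintre (hintim.const_mul Complex.I), integral_const_mul]
      rw [hre, him]
      ring
    rw [← inner_conj_symm, h1, map_zero]
  have : G = 0 := by
    have hfun : (fun f : Lp ℂ 2 μ => (inner ℂ G f : ℂ)) = fun _ => (0:ℂ) := by
      refine Continuous.ext_on hdense ?_ continuous_const ?_
      · exact continuous_const.inner continuous_id
      · rintro x ⟨ψ, rfl⟩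
        exact hzero ψ
    have := congrFun hfun G
    simpa using this
  calc φ =ᵐ[μ] ⇑G := (hφ.coeFn_toLp).symm
    _ =ᵐ[μ] 0 := by rw [this]; exact Lp.coeFn_zero ℂ 2 μ

set_option maxHeartbeats 2000000 in
/-- If `S > 0` is bounded, self-adjoint and invertible with
`AS - SA* = -iΠΠ*`, where `A` is the Volterra operator and `Π = [Φ₁ Φ₂]`,
then the closed span of the images `Im((A*)^i S⁻¹ Π)`, `i ≥ 0`, is all of
`L²((0,l); ℂ^{m2})`. -/
theorem stmt_11 (m1 m2 : ℕ) (l : ℝ) (hl : 0 < l)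
    (μ : Measure ℝ) (hμ : μ = volume.restrict (Set.Ioo 0 l))
    (A : Lp (EuclideanSpace ℂ (Fin m2)) 2 μ →L[ℂ] Lp (EuclideanSpace ℂ (Fin m2)) 2 μ)
    (hA : ∀ f : Lp (EuclideanSpace ℂ (Fin m2)) 2 μ,
      ∀ᵐ x ∂μ, (A f : ℝ → EuclideanSpace ℂ (Fin m2)) x =
        (-Complex.I) • ∫ t in Set.Ioc (0:ℝ) x, (f : ℝ → EuclideanSpace ℂ (Fin m2)) t)
    (Φ₁mat : ℝ → Matrix (Fin m2) (Fin m1) ℂ)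
    (hΦ₁meas : ∀ k i, Measurable fun x => Φ₁mat x k i) (C : ℝ) (hΦ₁bd : ∀ x, ∀ k i, ‖Φ₁mat x k i‖ ≤ C)
    (Pi0 : EuclideanSpace ℂ (Fin m1 ⊕ Fin m2) →L[ℂ] Lp (EuclideanSpace ℂ (Fin m2)) 2 μ)
    (hPi0 : ∀ g : EuclideanSpace ℂ (Fin m1 ⊕ Fin m2),
      ∀ᵐ x ∂μ, (Pi0 g : ℝ → EuclideanSpace ℂ (Fin m2)) x =
        (fun k => (Φ₁mat x).mulVec (fun i => g (Sum.inl i)) k + g (Sum.inr k)))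
    (S Sinv : Lp (EuclideanSpace ℂ (Fin m2)) 2 μ →L[ℂ] Lp (EuclideanSpace ℂ (Fin m2)) 2 μ)
    (hSsa : IsSelfAdjoint S)
    (hSpos : ∀ f, f ≠ 0 → 0 < (inner ℂ (S f) f : ℂ).re)
    (hSinv1 : S.comp Sinv = ContinuousLinearMap.id ℂ _)
    (hSinv2 : Sinv.comp S = ContinuousLinearMap.id ℂ _)
    (hid : A.comp S - S.comp (adjoint A) = (-Complex.I) • (Pi0.comp (adjoint Pi0))) :
    (⨆ i : ℕ, LinearMap.range ((((adjoint A) ^ i).comp (Sinv.comp Pi0)) :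
        EuclideanSpace ℂ (Fin m1 ⊕ Fin m2) →ₗ[ℂ] Lp (EuclideanSpace ℂ (Fin m2)) 2 μ)).topologicalClosure
      = ⊤ := by
  classical
  set V : Submodule ℂ (Lp (EuclideanSpace ℂ (Fin m2)) 2 μ) :=
    ⨆ i : ℕ, LinearMap.range ((((adjoint A) ^ i).comp (Sinv.comp Pi0)) :
      EuclideanSpace ℂ (Fin m1 ⊕ Fin m2) →ₗ[ℂ] Lp (EuclideanSpace ℂ (Fin m2)) 2 μ) with hV
  rw [Submodule.topologicalClosure_eq_top_iff, Submodule.eq_bot_iff]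
  intro f hf
  -- basic membership facts
  have hmem0 : ∀ (i : ℕ) (g : EuclideanSpace ℂ (Fin m1 ⊕ Fin m2)),
      ((adjoint A)^i) (Sinv (Pi0 g)) ∈ V := by
    intro i g
    refine Submodule.mem_iSup_of_mem i ⟨g, rfl⟩
  have hVA : ∀ v ∈ V, (adjoint A) v ∈ V := by
    intro v hv
    induction hv using Submodule.iSup_induction' with
    | mem i x hx =>
      obtain ⟨g, rfl⟩ := hx
      refine Submodule.mem_iSup_of_mem (i+1) ⟨g, ?_⟩
      simp only [LinearMap.coe_comp, ContinuousLinearMap.coe_coe, Function.comp_apply,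
        ContinuousLinearMap.coe_comp']
      rw [pow_succ']
      rfl
    | zero => simpa using Submodule.zero_mem V
    | add x y _ _ hx hy => rw [map_add]; exact V.add_mem hx hy
  -- the exchanged operator identity, elementwise
  have hSS : ∀ u, S (Sinv u) = u := fun u => congrArg (fun T => T u) hSinv1
  have hSS' : ∀ u, Sinv (S u) = u := fun u => congrArg (fun T => T u) hSinv2
  have hop : ∀ u, Sinv (A u)
      = adjoint A (Sinv u) + (-Complex.I) • Sinv (Pi0 (adjoint Pi0 (Sinv u))) := by
    intro u
    have h1 := congrArg (fun T => T (Sinv u)) hid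
    simp only [ContinuousLinearMap.sub_apply, ContinuousLinearMap.comp_apply,
      ContinuousLinearMap.smul_apply] at h1
    rw [hSS u] at h1
    have h2 : A u = S (adjoint A (Sinv u)) + (-Complex.I) • Pi0 (adjoint Pi0 (Sinv u)) := by
      rw [← h1]; abel
    rw [h2]
    simp only [map_add, _root_.map_smul, hSS']
  have hmemA : ∀ (i : ℕ) (g : EuclideanSpace ℂ (Fin m1 ⊕ Fin m2)),
      Sinv ((A^i) (Pi0 g)) ∈ V := by
    intro i
    induction i with
    | zero =>
      intro g
      have := hmem0 0 g
      rwa [pow_zero, ContinuousLinearMap.one_apply] at this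
    | succ i ih =>
      intro g
      have hco : (A^(i+1)) (Pi0 g) = A ((A^i) (Pi0 g)) := by rw [pow_succ', ContinuousLinearMap.mul_apply]
      rw [hco, hop]
      refine V.add_mem (hVA _ (ih g)) (V.smul_mem _ ?_)
      have := hmem0 0 (adjoint Pi0 (Sinv ((A^i) (Pi0 g))))
      rwa [pow_zero, ContinuousLinearMap.one_apply] at this
  -- transfer orthogonality
  set h : Lp (EuclideanSpace ℂ (Fin m2)) 2 μ := adjoint Sinv f with hh
  have hperp : ∀ (i : ℕ) (g : EuclideanSpace ℂ (Fin m1 ⊕ Fin m2)),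
      (inner ℂ ((A^i) (Pi0 g)) h : ℂ) = 0 := by
    intro i g
    rw [hh, ContinuousLinearMap.adjoint_inner_right]
    exact (Submodule.mem_orthogonal V f).1 hf _ (hmemA i g)
  -- iterated action of A on constants
  have hiter : ∀ (c : EuclideanSpace ℂ (Fin m2)) (i : ℕ),
      (((A^i) (Pi0 (WithLp.toLp 2 (fun s => Sum.elim (fun _ => (0:ℂ)) c s)))
          : Lp (EuclideanSpace ℂ (Fin m2)) 2 μ) : ℝ → EuclideanSpace ℂ (Fin m2))
        =ᵐ[μ] fun x : ℝ =>
          (((-Complex.I)^i * (x:ℂ)^i) / (i.factorial : ℂ)) • c := by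
    intro c i
    induction i with
    | zero =>
      simp only [pow_zero, one_apply, Nat.factorial_zero, Nat.cast_one, mul_one, div_one, one_smul]
      filter_upwards [hPi0 (WithLp.toLp 2 (fun s => Sum.elim (fun _ => (0:ℂ)) c s))] with x hx
      rw [ContinuousLinearMap.one_apply]
      apply WithLp.ofLp_injective
      rw [hx]
      funext k
      have hz0 : (fun i : Fin m1 => Sum.elim (fun _ => (0:ℂ)) c (Sum.inl i)) = 0 := rfl
      rw [hz0, Matrix.mulVec_zero]
      simp
    | succ i ih =>
      have hco : (A^(i+1)) (Pi0 (WithLp.toLp 2 (fun s => Sum.elim (fun _ => (0:ℂ)) c s)))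
          = A ((A^i) (Pi0 (WithLp.toLp 2 (fun s => Sum.elim (fun _ => (0:ℂ)) c s)))) := by
        rw [pow_succ', ContinuousLinearMap.mul_apply]
      have hprev' : ∀ᵐ t ∂(volume : Measure ℝ), t ∈ Set.Ioo 0 l →
          (((A^i) (Pi0 (WithLp.toLp 2 (fun s => Sum.elim (fun _ => (0:ℂ)) c s)))
            : Lp (EuclideanSpace ℂ (Fin m2)) 2 μ) : ℝ → EuclideanSpace ℂ (Fin m2)) t
          = (((-Complex.I)^i * (t:ℂ)^i) / (i.factorial : ℂ)) • c :=
        (ae_restrict_iff' measurableSet_Ioo).1 (hμ ▸ ih)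
      have hmu_ae : ∀ᵐ x ∂μ, x ∈ Set.Ioo 0 l := hμ ▸ ae_restrict_mem measurableSet_Ioo
      rw [hco]
      filter_upwards [hA ((A^i) (Pi0 (WithLp.toLp 2 (fun s => Sum.elim (fun _ => (0:ℂ)) c s)))), hmu_ae]
        with x hx hxI
      rw [hx]
      have hIeq : (∫ t in Set.Ioc (0:ℝ) x,
            (((A^i) (Pi0 (WithLp.toLp 2 (fun s => Sum.elim (fun _ => (0:ℂ)) c s)))
              : Lp (EuclideanSpace ℂ (Fin m2)) 2 μ) : ℝ → EuclideanSpace ℂ (Fin m2)) t)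
          = ∫ t in Set.Ioc (0:ℝ) x,
              ((((-Complex.I)^i * (t:ℂ)^i) / (i.factorial : ℂ)) • c) := by
        refine integral_congr_ae ((ae_restrict_iff' measurableSet_Ioc).2 ?_)
        filter_upwards [hprev'] with t ht htmem
        exact ht ⟨htmem.1, lt_of_le_of_lt htmem.2 hxI.2⟩
      rw [hIeq]
      have hpoly : (∫ t in Set.Ioc (0:ℝ) x,
            ((((-Complex.I)^i * (t:ℂ)^i) / (i.factorial : ℂ)) • c))
          = (((-Complex.I)^i / (i.factorial : ℂ)) * ((x:ℝ)^(i+1)/(i+1) : ℝ)) • c := by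
        rw [integral_smul_const]
        congr 1
        have : (fun t : ℝ => ((-Complex.I)^i * (t:ℂ)^i) / (i.factorial : ℂ))
            = fun t : ℝ => ((-Complex.I)^i / (i.factorial : ℂ)) * (((t^i : ℝ) : ℝ) : ℂ) := by
          funext t; push_cast; ring
        rw [this, integral_const_mul]
        have hOR : (∫ a in Set.Ioc (0:ℝ) x, ((a^i : ℝ) : ℂ))
            = (((∫ a in Set.Ioc (0:ℝ) x, a^i : ℝ)) : ℂ) := integral_ofReal
        rw [hOR, ← intervalIntegral.integral_of_le hxI.1.le, integral_pow]
        push_cast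
        ring
      rw [hpoly, smul_smul]
      congr 1
      have hfac : ((i+1).factorial : ℂ) = ((i:ℂ)+1) * (i.factorial : ℂ) := by
        push_cast [Nat.factorial_succ]; ring
      have h1 : ((i.factorial : ℂ)) ≠ 0 := by
        exact_mod_cast Nat.cast_ne_zero.2 (Nat.factorial_ne_zero i)
      have h2 : ((i:ℂ)+1) ≠ 0 := Nat.cast_add_one_ne_zero i
      rw [hfac]
      push_cast
      field_simp
      ring
  -- moments of the coordinates of h vanish
  have hcoord : ∀ k : Fin m2,
      (fun x : ℝ => (h : ℝ → EuclideanSpace ℂ (Fin m2)) x k)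
        =ᵐ[volume.restrict (Set.Ioo 0 l)] 0 := by
    intro k
    set c : EuclideanSpace ℂ (Fin m2) := EuclideanSpace.single k 1 with hc
    have hmom : ∀ n : ℕ, ∫ x in Set.Ioo 0 l,
        (x:ℂ)^n * (h : ℝ → EuclideanSpace ℂ (Fin m2)) x k = 0 := by
      intro n
      have hz := hperp n (WithLp.toLp 2 (fun s => Sum.elim (fun _ => (0:ℂ)) c s))
      rw [MeasureTheory.L2.inner_def] at hz
      have hinteq : (∫ a : ℝ, (inner ℂ
            (((A^n) (Pi0 (WithLp.toLp 2 (fun s => Sum.elim (fun _ => (0:ℂ)) c s)))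
              : Lp (EuclideanSpace ℂ (Fin m2)) 2 μ) a)
            ((h : ℝ → EuclideanSpace ℂ (Fin m2)) a) : ℂ) ∂μ)
          = ∫ a : ℝ, (conj ((-Complex.I)^n) / (n.factorial : ℂ))
              * ((a:ℂ)^n * (h : ℝ → EuclideanSpace ℂ (Fin m2)) a k) ∂μ := by
        apply integral_congr_ae
        filter_upwards [hiter c n] with a ha
        rw [ha, inner_smul_left, hc, EuclideanSpace.inner_single_left]
        simp only [map_one, one_mul, map_div₀, map_mul, map_pow, Complex.conj_ofReal, Complex.conj_natCast]
        ring
      rw [hinteq, integral_const_mul] at hz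
      have hne : (conj ((-Complex.I)^n) / (n.factorial : ℂ)) ≠ 0 := by
        apply div_ne_zero
        · simpa using pow_ne_zero n (neg_ne_zero.2 Complex.I_ne_zero)
        · exact_mod_cast Nat.cast_ne_zero.2 (Nat.factorial_ne_zero n)
      have hres := (mul_eq_zero.1 hz).resolve_left hne
      have hconv : ∀ F : ℝ → ℂ, (∫ a, F a ∂μ) = ∫ a in Set.Ioo 0 l, F a := by
        rw [hμ]; exact fun _ => rfl
      rw [← hconv]
      exact hres
    have hmem : MemLp (fun x : ℝ => (h : ℝ → EuclideanSpace ℂ (Fin m2)) x k) 2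
        (volume.restrict (Set.Ioo 0 l)) := by
      have hc2 := ((EuclideanSpace.proj k : EuclideanSpace ℂ (Fin m2) →L[ℂ] ℂ)).comp_memLp' (Lp.memLp h)
      have hconv : ∀ F : ℝ → ℂ, MemLp F 2 μ → MemLp F 2 (volume.restrict (Set.Ioo 0 l)) := by
        rw [hμ]; exact fun _ => id
      exact hconv _ hc2
    exact scalar_moment l hl _ hmem hmom
  -- conclude h = 0, then f = 0
  have hz : h = 0 := by
    apply Lp.ext
    have hconv : ∀ p : ℝ → Prop,
        (∀ᵐ x ∂(volume.restrict (Set.Ioo 0 l)), p x) → ∀ᵐ x ∂μ, p x := by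
      rw [hμ]; exact fun _ => id
    have hall : ∀ᵐ x ∂μ, ∀ k : Fin m2, (h : ℝ → EuclideanSpace ℂ (Fin m2)) x k = 0 :=
      hconv _ (ae_all_iff.2 fun k => hcoord k)
    filter_upwards [hall, Lp.coeFn_zero (EuclideanSpace ℂ (Fin m2)) 2 μ] with x hx h0
    rw [h0]
    ext k
    simpa using hx k
  have : f = adjoint S h := by
    rw [hh]
    change f = ((adjoint S).comp (adjoint Sinv)) f
    rw [← ContinuousLinearMap.adjoint_comp, hSinv2, adjoint_id]
    rfl
  rw [this, hz, map_zero]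
end

section
/- Let A, S, Π satisfy the operator identity AS - SA* = -iΠΠ* on a Hilbert space H, with Π : ℂ^m → H bounded, S bounded, self-adjoint, positive and boundedly invertible, and A bounded. Define w_A(z) = I_m - iz Π* S⁻¹ (I - zA)⁻¹ Π for z with 1/z in the resolvent set of A. Then w_A(z)* w_A(z) = I_m + i(z̄ - z) Π* (I - z̄A*)⁻¹ S⁻¹ (I - zA)⁻¹ Π. -/
open ContinuousLinearMap

set_option maxHeartbeats 1600000

/-- For an S-node `AS - SA* = -iΠΠ*` the transfer function
`w_A(z) = I - izΠ*S⁻¹(I - zA)⁻¹Π` satisfies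
`w_A(z)* w_A(z) = I + i(z̄ - z) Π*(I - z̄A*)⁻¹ S⁻¹ (I - zA)⁻¹ Π`. -/
theorem stmt_13 (m : ℕ) (H : Type*) [NormedAddCommGroup H]
    [InnerProductSpace ℂ H] [CompleteSpace H]
    (A S Sinv : H →L[ℂ] H) (Pi0 : EuclideanSpace ℂ (Fin m) →L[ℂ] H)
    (hSsa : IsSelfAdjoint S)
    (hSpos : ∀ f, f ≠ 0 → 0 < (inner ℂ (S f) f : ℂ).re)
    (hS1 : S * Sinv = 1) (hS2 : Sinv * S = 1)
    (hid : A * S - S * adjoint A = (-Complex.I) • (Pi0.comp (adjoint Pi0)))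
    (z : ℂ) (R : H →L[ℂ] H)
    (hR1 : (1 - z • A) * R = 1) (hR2 : R * (1 - z • A) = 1)
    (w : EuclideanSpace ℂ (Fin m) →L[ℂ] EuclideanSpace ℂ (Fin m))
    (hw : w = 1 - (Complex.I * z) • ((adjoint Pi0).comp (Sinv.comp (R.comp Pi0)))) :
    (adjoint w) * w =
      1 + (Complex.I * (starRingEnd ℂ z - z)) •
        ((adjoint Pi0).comp ((adjoint R).comp (Sinv.comp (R.comp Pi0)))) := by
  have hSstar : star S = S := hSsa
  have hSinv : star Sinv = Sinv := by
    have h1 : star Sinv * S = 1 := by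
      have := congrArg star hS1
      simpa [star_mul, hSstar] using this
    calc star Sinv = star Sinv * (S * Sinv) := by rw [hS1, mul_one]
    _ = (star Sinv * S) * Sinv := by rw [mul_assoc]
    _ = Sinv := by rw [h1, one_mul]
  have hRst1 : star R * (1 - (starRingEnd ℂ z) • star A) = 1 := by
    have := congrArg star hR1
    simpa [star_mul, star_sub, star_smul] using this
  have hRst2 : (1 - (starRingEnd ℂ z) • star A) * star R = 1 := by
    have := congrArg star hR2
    simpa [star_mul, star_sub, star_smul] using this
  set P0 : H →L[ℂ] H := Pi0.comp (adjoint Pi0) with hP0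
  have hPP : P0 = Complex.I • (A * S - S * star A) := by
    rw [star_eq_adjoint, hid, smul_smul]
    simp [Complex.I_mul_I]
  have hmid : Sinv * P0 * Sinv = Complex.I • (Sinv * A - star A * Sinv) := by
    rw [hPP, mul_smul_comm, smul_mul_assoc]
    congr 1
    rw [mul_sub, sub_mul]
    congr 1
    · simp only [mul_assoc]
      rw [hS1, mul_one]
    · simp only [mul_assoc]
      rw [← mul_assoc, hS2, one_mul]
  have e1 : Sinv * R = star R * ((1 - (starRingEnd ℂ z) • star A) * (Sinv * R)) := by
    rw [← mul_assoc, hRst1, one_mul]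
  have e2 : star R * Sinv = (star R * Sinv) * ((1 - z • A) * R) := by
    rw [hR1, mul_one]
  have key : -(Complex.I * z) • (Sinv * R) + (Complex.I * starRingEnd ℂ z) • (star R * Sinv)
      + (starRingEnd ℂ z * z) • (star R * ((Sinv * P0 * Sinv) * R))
      = (Complex.I * (starRingEnd ℂ z - z)) • (star R * (Sinv * R)) := by
    conv_lhs => rw [e1, e2, hmid]
    simp only [sub_mul, mul_sub, one_mul, smul_mul_assoc, mul_smul_comm, mul_assoc, smul_smul,
      smul_sub, sub_smul, mul_one]
    module
  -- adjoint of w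
  have hadj : adjoint w = 1 + (Complex.I * starRingEnd ℂ z) •
      ((adjoint Pi0).comp ((star R * Sinv).comp Pi0)) := by
    rw [hw, ← star_eq_adjoint, star_sub, star_one, star_smul]
    rw [star_eq_adjoint, adjoint_comp, adjoint_comp, adjoint_comp, adjoint_adjoint,
      ← star_eq_adjoint Sinv, hSinv, ← star_eq_adjoint R]
    have hsc : star (Complex.I * z) = -(Complex.I * starRingEnd ℂ z) := by
      simp [Complex.ext_iff, mul_comm]
    rw [hsc, neg_smul, sub_neg_eq_add]
    simp only [mul_def, comp_assoc]
  rw [hadj, hw]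
  have hq : Sinv.comp (R.comp Pi0) = (Sinv * R).comp Pi0 := (comp_assoc _ _ _).symm
  have hcross : ((adjoint Pi0).comp ((star R * Sinv).comp Pi0)) *
      ((adjoint Pi0).comp ((Sinv * R).comp Pi0)) =
      (adjoint Pi0).comp ((star R * ((Sinv * P0 * Sinv) * R)).comp Pi0) := by
    rw [hP0]
    simp only [mul_def, comp_assoc]
  have hscal : Complex.I * starRingEnd ℂ z * (Complex.I * z) = -(starRingEnd ℂ z * z) := by
    have : Complex.I * Complex.I = -1 := Complex.I_mul_I
    ring_nf
    rw [mul_comm]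
    ring_nf
    rw [Complex.I_sq]
    ring
  have expand : (1 + (Complex.I * starRingEnd ℂ z) •
        ((adjoint Pi0).comp ((star R * Sinv).comp Pi0))) *
      (1 - (Complex.I * z) • ((adjoint Pi0).comp (Sinv.comp (R.comp Pi0)))) =
      1 + ((adjoint Pi0).comp
        ((-(Complex.I * z) • (Sinv * R) + (Complex.I * starRingEnd ℂ z) • (star R * Sinv)
          + (starRingEnd ℂ z * z) • (star R * ((Sinv * P0 * Sinv) * R))).comp Pi0)) := by
    rw [hq]
    simp only [mul_sub, add_mul, mul_one, one_mul, smul_mul_assoc, mul_smul_comm, smul_smul]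
    have hscal2 : (Complex.I * z) * (Complex.I * starRingEnd ℂ z) = -(starRingEnd ℂ z * z) := by
      rw [mul_comm]; exact hscal
    rw [smul_add, smul_smul, hscal2, hcross]
    simp only [comp_add, add_comp, comp_smul, smul_comp, neg_smul, one_smul, comp_neg, neg_comp]
    abel
  rw [expand, key]
  have hgoal : (adjoint Pi0).comp ((adjoint R).comp (Sinv.comp (R.comp Pi0))) =
      (adjoint Pi0).comp ((star R * (Sinv * R)).comp Pi0) := by
    rw [← star_eq_adjoint R]
    simp only [mul_def, comp_assoc]
  rw [hgoal]
  simp only [comp_smul, smul_comp]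
end

section
/- Let f : ℂ₊' → ℂ^{m2×m1} be analytic and non-expansive (‖f(z)‖ ≤ 1) on the half-plane {Im z > M}, and suppose there exists r > 0 with ∫₀ʳ e^{2i(x-r)z} F(x) dx = O(1/√(Im z)) uniformly in Re z as Im z → ∞, where F ∈ L²((0,r); ℂ^{m2×m1}). Then ∫₀ʳ e^{2i(x-r)z} F(x) dx ≡ 0 for all z ∈ ℂ, and hence F(x) = 0 for almost every x ∈ (0,r). -/
open MeasureTheory Set Complex
open scoped Matrix.Norms.L2Operator

variable {E : Type*} [NormedAddCommGroup E] [NormedSpace ℂ E] [CompleteSpace E]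

lemma aux_norm (x r : ℝ) (z : ℂ) :
    ‖Complex.exp (2*Complex.I*((x:ℂ)-r)*z)‖ = Real.exp (2*(r-x)*z.im) := by
  rw [Complex.norm_exp]
  congr 1
  simp [Complex.mul_re, Complex.mul_im]
  ring

lemma aux_asm {r : ℝ} (F : ℝ → E)
    (hFi : Integrable F (volume.restrict (Set.Ioo 0 r))) (z : ℂ) :
    AEStronglyMeasurable (fun x : ℝ => Complex.exp (2*Complex.I*((x:ℂ)-r)*z) • F x)
      (volume.restrict (Set.Ioo 0 r)) := by
  apply AEStronglyMeasurable.smul _ hFi.aestronglyMeasurable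
  apply Continuous.aestronglyMeasurable
  continuity

lemma aux_int {r : ℝ} (hr : 0 < r) (F : ℝ → E)
    (hFi : Integrable F (volume.restrict (Set.Ioo 0 r))) (z : ℂ) :
    Integrable (fun x : ℝ => Complex.exp (2*Complex.I*((x:ℂ)-r)*z) • F x)
      (volume.restrict (Set.Ioo 0 r)) := by
  apply Integrable.mono' (hFi.norm.const_mul (Real.exp (2*r*|z.im|))) (aux_asm F hFi z)
  filter_upwards [ae_restrict_mem measurableSet_Ioo] with x hx
  rw [norm_smul, aux_norm]
  have hb : (2*(r-x)*z.im) ≤ (2*r*|z.im|) := by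
    nlinarith [le_abs_self z.im, neg_abs_le z.im, hx.1, hx.2, abs_nonneg z.im]
  exact mul_le_mul_of_nonneg_right (Real.exp_le_exp.2 hb) (norm_nonneg _)

lemma aux_entire {r : ℝ} (hr : 0 < r) (F : ℝ → E)
    (hFi : Integrable F (volume.restrict (Set.Ioo 0 r))) :
    Differentiable ℂ (fun z : ℂ => ∫ x in Set.Ioo (0:ℝ) r,
      Complex.exp (2*Complex.I*((x:ℂ)-r)*z) • F x) := by
  intro z₀
  have key := hasDerivAt_integral_of_dominated_loc_of_deriv_le (𝕜 := ℂ)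
    (μ := volume.restrict (Set.Ioo (0:ℝ) r))
    (F := fun z x => Complex.exp (2*Complex.I*((x:ℂ)-r)*z) • F x)
    (F' := fun z x => (2*Complex.I*((x:ℂ)-r) * Complex.exp (2*Complex.I*((x:ℂ)-r)*z)) • F x)
    (x₀ := z₀)
    (bound := fun x => 2*r*Real.exp (2*r*(|z₀.im|+1))*‖F x‖)
    (Metric.ball_mem_nhds z₀ one_pos)
    (Filter.Eventually.of_forall fun z => aux_asm F hFi z)
    (aux_int hr F hFi z₀)
    ?_ ?_ ((hFi.norm.const_mul _)) ?_
  · exact key.2.differentiableAt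
  · -- measurability of F' z₀
    apply AEStronglyMeasurable.smul _ hFi.aestronglyMeasurable
    apply Continuous.aestronglyMeasurable
    continuity
  · -- bound
    filter_upwards [ae_restrict_mem measurableSet_Ioo] with x hx z hz
    rw [norm_smul, norm_mul, aux_norm]
    have h1 : ‖2*Complex.I*((x:ℂ)-r)‖ ≤ 2*r := by
      simp only [norm_mul, Complex.norm_two, Complex.norm_I, mul_one]
      have : ‖(x:ℂ)-r‖ = |x - r| := by
        rw [← Complex.ofReal_sub, Complex.norm_real, Real.norm_eq_abs]
      rw [this]
      rw [abs_sub_comm, abs_of_pos (by linarith [hx.1, hx.2])]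
      nlinarith [hx.1]
    have h2 : |z.im| ≤ |z₀.im| + 1 := by
      have h2a := Complex.abs_im_le_norm (z - z₀)
      simp only [Complex.sub_im] at h2a
      rw [Metric.mem_ball, Complex.dist_eq] at hz
      have habs : |z.im - z₀.im| ≤ 1 := h2a.trans hz.le
      have := abs_sub_abs_le_abs_sub z.im z₀.im
      linarith
    have h3 : Real.exp (2*(r-x)*z.im) ≤ Real.exp (2*r*(|z₀.im|+1)) := by
      apply Real.exp_le_exp.2
      have hA : z.im ≤ |z₀.im| + 1 := (le_abs_self z.im).trans h2
      have hA0 : (0:ℝ) ≤ |z₀.im| + 1 := by positivity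
      nlinarith [mul_nonneg (by linarith [hx.2] : (0:ℝ) ≤ r - x)
          (by linarith : (0:ℝ) ≤ (|z₀.im|+1) - z.im),
        mul_nonneg hx.1.le hA0]
    have h4 := mul_le_mul h1 h3 (Real.exp_pos _).le (by positivity : (0:ℝ) ≤ 2*r)
    exact mul_le_mul_of_nonneg_right h4 (norm_nonneg _)
  · -- differentiability
    filter_upwards with x z _
    have hd : HasDerivAt (fun w : ℂ => Complex.exp (2*Complex.I*((x:ℂ)-r)*w))
        (Complex.exp (2*Complex.I*((x:ℂ)-r)*z) * (2*Complex.I*((x:ℂ)-r))) z := by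
      simpa using ((hasDerivAt_id z).const_mul (2*Complex.I*((x:ℂ)-r))).cexp
    have := hd.smul_const (F x)
    convert this using 1
    rw [mul_comm]

lemma aux_g_zero {r : ℝ} (hr : 0 < r) (F : ℝ → E)
    (hFi : Integrable F (volume.restrict (Set.Ioo 0 r)))
    (C M₀ : ℝ)
    (hbd : ∀ z : ℂ, M₀ ≤ z.im → ‖∫ x in Set.Ioo (0:ℝ) r,
       Complex.exp (2*Complex.I*((x:ℂ)-r)*z) • F x‖ ≤ C / Real.sqrt z.im) :
    ∀ z : ℂ, (∫ x in Set.Ioo (0:ℝ) r, Complex.exp (2*Complex.I*((x:ℂ)-r)*z) • F x) = 0 := by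
  set G := fun z : ℂ => ∫ x in Set.Ioo (0:ℝ) r, Complex.exp (2*Complex.I*((x:ℂ)-r)*z) • F x
    with hG
  have hdiff : Differentiable ℂ G := aux_entire hr F hFi
  set T : ℝ := max M₀ 1 with hT
  have hT1 : (1:ℝ) ≤ T := le_max_right _ _
  set B₁ : ℝ := ∫ x in Set.Ioo (0:ℝ) r, ‖F x‖ with hB₁
  have hB₁0 : 0 ≤ B₁ := integral_nonneg fun x => norm_nonneg _
  have hnorm : ∀ z : ℂ, z.im ≤ T → ‖G z‖ ≤ Real.exp (2*r*T) * B₁ := by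
    intro z hz
    refine (norm_integral_le_integral_norm _).trans ?_
    rw [hB₁, ← integral_const_mul]
    apply integral_mono_ae (aux_int hr F hFi z).norm (hFi.norm.const_mul _)
    filter_upwards [ae_restrict_mem measurableSet_Ioo] with x hx
    rw [norm_smul, aux_norm]
    have hb : 2*(r-x)*z.im ≤ 2*r*T := by
      nlinarith [mul_nonneg (by linarith [hx.2] : (0:ℝ) ≤ r - x) (by linarith : (0:ℝ) ≤ T - z.im),
        mul_nonneg hx.1.le (by linarith : (0:ℝ) ≤ T)]
    exact mul_le_mul_of_nonneg_right (Real.exp_le_exp.2 hb) (norm_nonneg _)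
  have hbound : ∀ z : ℂ, ‖G z‖ ≤ max |C| (Real.exp (2*r*T) * B₁) := by
    intro z
    rcases le_or_gt z.im T with h | h
    · exact (hnorm z h).trans (le_max_right _ _)
    · have h1 : M₀ ≤ z.im := le_trans (le_max_left _ _) h.le
      refine (hbd z h1).trans (le_max_of_le_left ?_)
      have hs : 1 ≤ Real.sqrt z.im := by
        rw [show (1:ℝ) = Real.sqrt 1 from (Real.sqrt_one).symm]
        exact Real.sqrt_le_sqrt (by linarith)
      calc C / Real.sqrt z.im ≤ |C| / Real.sqrt z.im :=
            div_le_div_of_nonneg_right (le_abs_self C) (by linarith)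
          _ ≤ |C| := div_le_self (abs_nonneg C) hs
  have hrange : Bornology.IsBounded (Set.range G) := by
    apply isBounded_iff_forall_norm_le.2
    exact ⟨_, by rintro y ⟨z, rfl⟩; exact hbound z⟩
  have hconst : ∀ z w : ℂ, G z = G w := fun z w =>
    hdiff.apply_eq_apply_of_bounded hrange z w
  intro z
  have hseq : ∀ t : ℝ, T ≤ t → ‖G z‖ ≤ C / Real.sqrt t := by
    intro t ht
    have him : ((t:ℂ) * Complex.I).im = t := by simp
    have h2 := hbd ((t:ℂ) * Complex.I) (by rw [him]; exact le_trans (le_max_left _ _) ht)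
    rw [him] at h2
    rw [hconst z ((t:ℂ)*Complex.I)]
    exact h2
  have hsqrt : Filter.Tendsto Real.sqrt Filter.atTop Filter.atTop := by
    have := tendsto_rpow_atTop (by norm_num : (0:ℝ) < 1/2)
    apply Filter.Tendsto.congr _ this
    intro x
    rw [Real.sqrt_eq_rpow]
  have htend : Filter.Tendsto (fun t : ℝ => C / Real.sqrt t) Filter.atTop (nhds 0) := by
    have := (hsqrt.inv_tendsto_atTop).const_mul C
    simpa [div_eq_mul_inv] using this
  have hle : ‖G z‖ ≤ 0 := ge_of_tendsto htend (Filter.eventually_atTop.2 ⟨T, hseq⟩)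
  exact norm_le_zero_iff.1 hle


lemma aux_fourier_unique {r : ℝ} (hr : 0 < r) (h : ℝ → ℂ)
    (hmem : MemLp h 2 (volume.restrict (Set.Ioo 0 r)))
    (hz : ∀ n : ℤ, ∫ x in Set.Ioo (0:ℝ) r,
      (fourier (-n) (x : AddCircle r)) * h x = 0) :
    ∀ᵐ x ∂(volume.restrict (Set.Ioo (0:ℝ) r)), h x = 0 := by
  haveI : Fact (0 < r) := ⟨hr⟩
  obtain ⟨h₀, h₀m, h₀e⟩ := hmem.aestronglyMeasurable
  have hre : volume.restrict (Ioo (0:ℝ) r) = volume.restrict (Ioc 0 r) :=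
    Measure.restrict_congr_set Ioo_ae_eq_Ioc
  have h₀e' : h =ᵐ[volume.restrict (Ioc (0:ℝ) r)] h₀ := hre ▸ h₀e
  have hmem₀ : MemLp h₀ 2 (volume.restrict (Ioc (0:ℝ) r)) := by
    rw [← hre]; exact hmem.ae_eq h₀e
  set H := AddCircle.liftIoc r 0 h₀ with hHdef
  have hcoe : ∀ x ∈ Set.Ioc (0:ℝ) r, H (x : AddCircle r) = h₀ x := by
    intro x hx
    apply AddCircle.liftIoc_coe_apply
    simpa using hx
  have Hmeas : Measurable H := by
    have : H = (fun y : Ioc (0:ℝ) (0+r) => h₀ y) ∘ (AddCircle.measurableEquivIoc r 0) := rfl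
    rw [this]
    exact (h₀m.measurable.comp measurable_subtype_coe).comp
      (AddCircle.measurableEquivIoc r 0).measurable
  have hmp := AddCircle.measurePreserving_mk r 0
  have hHcoe : (fun x : ℝ => H x) =ᵐ[volume.restrict (Ioc (0:ℝ) r)] h₀ := by
    filter_upwards [ae_restrict_mem measurableSet_Ioc] with x hx
    exact hcoe x hx
  have hmemH : MemLp H 2 (volume : Measure (AddCircle r)) := by
    rw [← hmp.map_eq,
      memLp_map_measure_iff Hmeas.aestronglyMeasurable AddCircle.measurable_mk'.aemeasurable]
    rw [zero_add]
    exact hmem₀.ae_eq hHcoe.symm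
  have hhaar : (AddCircle.haarAddCircle : Measure (AddCircle r))
      = (ENNReal.ofReal r)⁻¹ • (volume : Measure (AddCircle r)) := by
    rw [AddCircle.volume_eq_smul_haarAddCircle, ← smul_assoc, smul_eq_mul,
      ENNReal.inv_mul_cancel (by simpa using hr) ENNReal.ofReal_ne_top, one_smul]
  have hmemH' : MemLp H 2 (AddCircle.haarAddCircle) := by
    rw [hhaar]
    exact hmemH.smul_measure (by simp [hr])
  set φ := hmemH'.toLp H with hφ
  have hrep : ∀ n : ℤ, fourierBasis.repr φ n = 0 := by
    intro n
    rw [fourierBasis_repr]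
    have e1 : fourierCoeff (φ : AddCircle r → ℂ) n = fourierCoeff H n := by
      apply integral_congr_ae
      filter_upwards [hmemH'.coeFn_toLp] with x hx
      rw [hx]
    rw [e1, hHdef, fourierCoeff_liftIoc_eq, fourierCoeffOn_eq_integral]
    have e2 : ∫ x in (0:ℝ)..(0+r), fourier (-n) ((x:ℝ) : AddCircle (0+r-0)) • h₀ x = 0 := by
      rw [intervalIntegral.integral_of_le (by linarith), integral_Ioc_eq_integral_Ioo]
      have h3 : (fun x : ℝ => fourier (-n) ((x:ℝ) : AddCircle (r-0)) • h₀ x)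
            =ᵐ[volume.restrict (Ioo (0:ℝ) r)]
          (fun x : ℝ => fourier (-n) ((x:ℝ) : AddCircle r) * h x) := by
        filter_upwards [h₀e] with x hx
        rw [fourier_coe_apply, fourier_coe_apply, smul_eq_mul, ← hx]
        norm_num
      calc ∫ x in Ioo (0:ℝ) (0+r), fourier (-n) ((x:ℝ) : AddCircle (0+r-0)) • h₀ x
          = ∫ x in Ioo (0:ℝ) r, fourier (-n) ((x:ℝ) : AddCircle r) * h x := by
            rw [zero_add]
            exact integral_congr_ae h3
        _ = 0 := hz n
    rw [e2, smul_zero]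
  have hφ0 : φ = 0 := by
    apply (fourierBasis (T := r)).repr.injective
    rw [map_zero]
    ext n
    simpa using hrep n
  have hH0 : H =ᵐ[AddCircle.haarAddCircle] 0 := by
    have := hmemH'.coeFn_toLp
    rw [← hφ] at this
    refine this.symm.trans ?_
    rw [hφ0]
    exact Lp.coeFn_zero ℂ 2 _
  have hH0v : H =ᵐ[(volume : Measure (AddCircle r))] 0 := by
    rw [AddCircle.volume_eq_smul_haarAddCircle]
    exact MeasureTheory.Measure.ae_smul_measure hH0 _
  have hcomp : (fun x : ℝ => H x) =ᵐ[volume.restrict (Ioc 0 (0+r))] 0 := by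
    have := MeasureTheory.ae_eq_comp (μ := volume.restrict (Ioc 0 (0+r)))
      (f := ((↑) : ℝ → AddCircle r)) (g := H) (g' := (0 : AddCircle r → ℂ))
      (AddCircle.measurable_mk'.aemeasurable)
      (by rw [hmp.map_eq]; exact hH0v)
    exact this
  rw [zero_add] at hcomp
  have : h =ᵐ[volume.restrict (Ioc (0:ℝ) r)] 0 :=
    h₀e'.trans (hHcoe.symm.trans hcomp)
  rw [hre]
  exact this


set_option maxHeartbeats 1000000 in
/-- If the Fourier–Laplace transform `∫₀ʳ e^{2i(x-r)z}F(x)dx` of an `L²` matrix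
function `F` is `O(1/√Im z)` uniformly in `Re z` as `Im z → ∞`, then it vanishes
identically and `F = 0` a.e. on `(0,r)`. (The analytic non-expansive function
`f` provides the context of the original statement.) -/
theorem stmt_17 (m1 m2 : ℕ) (M : ℝ) (hM : 0 < M)
    (f : ℂ → Matrix (Fin m2) (Fin m1) ℂ)
    (hf : DifferentiableOn ℂ f {z : ℂ | M < z.im})
    (hfne : ∀ z : ℂ, M < z.im → ‖f z‖ ≤ 1)
    (r : ℝ) (hr : 0 < r)
    (F : ℝ → Matrix (Fin m2) (Fin m1) ℂ)
    (hF : MemLp F 2 (volume.restrict (Set.Ioo 0 r)))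
    (g : ℂ → Matrix (Fin m2) (Fin m1) ℂ)
    (hg : ∀ z, g z = ∫ x in Set.Ioo (0:ℝ) r,
      Complex.exp (2 * Complex.I * ((x : ℂ) - (r : ℂ)) * z) • F x)
    (hbd : ∃ C M₀ : ℝ, ∀ z : ℂ, M₀ ≤ z.im → ‖g z‖ ≤ C / Real.sqrt z.im) :
    (∀ z : ℂ, g z = 0) ∧
      ∀ᵐ x ∂(volume.restrict (Set.Ioo (0:ℝ) r)), F x = 0 := by
  classical
  haveI : IsFiniteMeasure (volume.restrict (Set.Ioo (0:ℝ) r)) := by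
    constructor
    simp [Real.volume_Ioo]
  have hFi : Integrable F (volume.restrict (Set.Ioo 0 r)) := hF.integrable one_le_two
  obtain ⟨C, M₀, hbd'⟩ := hbd
  have hbd2 : ∀ z : ℂ, M₀ ≤ z.im → ‖∫ x in Set.Ioo (0:ℝ) r,
       Complex.exp (2*Complex.I*((x:ℂ)-r)*z) • F x‖ ≤ C / Real.sqrt z.im := by
    intro z hz
    rw [← hg z]
    exact hbd' z hz
  have hz0 := aux_g_zero hr F hFi C M₀ hbd2
  have hgz : ∀ z, g z = 0 := fun z => by rw [hg z]; exact hz0 z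
  refine ⟨hgz, ?_⟩
  have hent : ∀ (i : Fin m2) (j : Fin m1),
      ∀ᵐ x ∂(volume.restrict (Set.Ioo (0:ℝ) r)), F x i j = 0 := by
    intro i j
    let L : Matrix (Fin m2) (Fin m1) ℂ →L[ℂ] ℂ :=
      LinearMap.toContinuousLinearMap
        { toFun := fun A => A i j
          map_add' := fun A B => rfl
          map_smul' := fun c A => rfl }
    have hLapp : ∀ A : Matrix (Fin m2) (Fin m1) ℂ, L A = A i j := fun A => rfl
    have hmemh : MemLp (fun x => F x i j) 2 (volume.restrict (Set.Ioo (0:ℝ) r)) := by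
      have := L.comp_memLp' hF
      exact this
    apply aux_fourier_unique hr _ hmemh
    intro n
    set t : ℝ := -(Real.pi * (n:ℝ) / r) with ht
    have h1 : ∫ x in Set.Ioo (0:ℝ) r,
        Complex.exp (2*Complex.I*((x:ℂ)-r)*(t:ℂ)) * (F x i j) = 0 := by
      calc ∫ x in Set.Ioo (0:ℝ) r, Complex.exp (2*Complex.I*((x:ℂ)-r)*(t:ℂ)) * (F x i j)
          = ∫ x in Set.Ioo (0:ℝ) r, L (Complex.exp (2*Complex.I*((x:ℂ)-r)*(t:ℂ)) • F x) := by
            refine integral_congr_ae (Filter.Eventually.of_forall fun x => ?_)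
            beta_reduce
            rw [hLapp, Matrix.smul_apply, smul_eq_mul]
        _ = L (∫ x in Set.Ioo (0:ℝ) r, Complex.exp (2*Complex.I*((x:ℂ)-r)*(t:ℂ)) • F x) :=
            L.integral_comp_comm (aux_int hr F hFi (t:ℂ))
        _ = 0 := by rw [hz0 (t:ℂ), map_zero]
    have h2 : ∫ x in Set.Ioo (0:ℝ) r,
        Complex.exp (2*Complex.I*(x:ℂ)*(t:ℂ)) * (F x i j) = 0 := by
      have h2a := congrArg (fun w => Complex.exp (2*Complex.I*(r:ℂ)*(t:ℂ)) * w) h1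
      simp only [mul_zero] at h2a
      rw [← integral_const_mul] at h2a
      rw [← h2a]
      refine integral_congr_ae (Filter.Eventually.of_forall fun x => ?_)
      beta_reduce
      rw [← mul_assoc, ← Complex.exp_add]
      congr 2
      ring
    have hrne : (r:ℂ) ≠ 0 := by exact_mod_cast hr.ne'
    have heq : ∀ x : ℝ, (fourier (-n) ((x:ℝ) : AddCircle r) : ℂ)
        = Complex.exp (2*Complex.I*(x:ℂ)*(t:ℂ)) := by
      intro x
      rw [fourier_coe_apply]
      congr 1
      rw [ht]
      push_cast
      field_simp
    calc ∫ x in Set.Ioo (0:ℝ) r, (fourier (-n) ((x:ℝ) : AddCircle r) : ℂ) * F x i j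
        = ∫ x in Set.Ioo (0:ℝ) r, Complex.exp (2*Complex.I*(x:ℂ)*(t:ℂ)) * F x i j := by
          refine integral_congr_ae (Filter.Eventually.of_forall fun x => ?_)
          beta_reduce
          rw [heq x]
      _ = 0 := h2
  have hall : ∀ᵐ x ∂(volume.restrict (Set.Ioo (0:ℝ) r)),
      ∀ (i : Fin m2) (j : Fin m1), F x i j = 0 :=
    ae_all_iff.2 fun i => ae_all_iff.2 fun j => hent i j
  filter_upwards [hall] with x hx
  ext i j
  simpa using hx i j
end

section
/- Let β : [0,l] → ℂ^{m1×m} and γ : [0,l] → ℂ^{m2×m} be continuously differentiable with ββ* ≡ I_{m1}, γγ* ≡ I_{m2}, βγ* ≡ 0, β'β* ≡ 0, and γ'γ* ≡ 0 (m = m1+m2). Suppose θ : [0,l] → ℂ^{m1×m} is continuously differentiable with θγ* ≡ 0, βθ'* ≡ 0, and θ(0) = β(0). Then θ ≡ β. -/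
open Matrix

/-- Uniqueness: if `θγᴴ ≡ 0`, `βθ'ᴴ ≡ 0` and `θ(0) = β(0)`, where `β, γ` are
the block rows of a unitary-valued `C¹` matrix function with `β'βᴴ ≡ 0` and
`γ'γᴴ ≡ 0`, then `θ ≡ β` on `[0, l]`. -/
theorem stmt_18 (m1 m2 : ℕ) (l : ℝ) (hl : 0 < l)
    (β β' θ θ' : ℝ → Matrix (Fin m1) (Fin m1 ⊕ Fin m2) ℂ)
    (γ γ' : ℝ → Matrix (Fin m2) (Fin m1 ⊕ Fin m2) ℂ)
    (hβd : ∀ x ∈ Set.Icc (0:ℝ) l, ∀ a b,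
      HasDerivWithinAt (fun s => β s a b) (β' x a b) (Set.Icc 0 l) x)
    (hβ'c : ∀ a b, ContinuousOn (fun x => β' x a b) (Set.Icc 0 l))
    (hγd : ∀ x ∈ Set.Icc (0:ℝ) l, ∀ a b,
      HasDerivWithinAt (fun s => γ s a b) (γ' x a b) (Set.Icc 0 l) x)
    (hγ'c : ∀ a b, ContinuousOn (fun x => γ' x a b) (Set.Icc 0 l))
    (hθd : ∀ x ∈ Set.Icc (0:ℝ) l, ∀ a b,
      HasDerivWithinAt (fun s => θ s a b) (θ' x a b) (Set.Icc 0 l) x)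
    (hθ'c : ∀ a b, ContinuousOn (fun x => θ' x a b) (Set.Icc 0 l))
    (hββ : ∀ x ∈ Set.Icc (0:ℝ) l, β x * (β x)ᴴ = 1)
    (hγγ : ∀ x ∈ Set.Icc (0:ℝ) l, γ x * (γ x)ᴴ = 1)
    (hβγ : ∀ x ∈ Set.Icc (0:ℝ) l, β x * (γ x)ᴴ = 0)
    (hβ'β : ∀ x ∈ Set.Icc (0:ℝ) l, β' x * (β x)ᴴ = 0)
    (hγ'γ : ∀ x ∈ Set.Icc (0:ℝ) l, γ' x * (γ x)ᴴ = 0)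
    (hθγ : ∀ x ∈ Set.Icc (0:ℝ) l, θ x * (γ x)ᴴ = 0)
    (hβθ' : ∀ x ∈ Set.Icc (0:ℝ) l, β x * (θ' x)ᴴ = 0)
    (h0 : θ 0 = β 0) :
    ∀ x ∈ Set.Icc (0:ℝ) l, θ x = β x := by
  have h0mem : (0:ℝ) ∈ Set.Icc (0:ℝ) l := ⟨le_refl 0, hl.le⟩
  -- Key identity: βᴴβ + γᴴγ = 1
  have hkey : ∀ x ∈ Set.Icc (0:ℝ) l, (β x)ᴴ * β x + (γ x)ᴴ * γ x = 1 := by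
    intro x hx
    have hU : fromRows (β x) (γ x) * fromCols (β x)ᴴ (γ x)ᴴ = 1 := by
      rw [fromRows_mul_fromCols, hββ x hx, hγγ x hx, hβγ x hx]
      have : γ x * (β x)ᴴ = 0 := by
        have := congrArg conjTranspose (hβγ x hx)
        simpa [conjTranspose_mul] using this
      rw [this, fromBlocks_one]
    have hU' : fromCols (β x)ᴴ (γ x)ᴴ * fromRows (β x) (γ x) = 1 :=
      mul_eq_one_comm.mp hU
    rwa [fromCols_mul_fromRows] at hU'
  -- θ = (θβᴴ)β on the interval
  have hθeq : ∀ x ∈ Set.Icc (0:ℝ) l, θ x = θ x * (β x)ᴴ * β x := by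
    intro x hx
    calc θ x = θ x * ((β x)ᴴ * β x + (γ x)ᴴ * γ x) := by rw [hkey x hx, Matrix.mul_one]
    _ = θ x * (β x)ᴴ * β x + θ x * (γ x)ᴴ * γ x := by
        rw [Matrix.mul_add, Matrix.mul_assoc, Matrix.mul_assoc]
    _ = θ x * (β x)ᴴ * β x := by rw [hθγ x hx, Matrix.zero_mul, add_zero]
  -- θβ'ᴴ = 0
  have hθβ' : ∀ x ∈ Set.Icc (0:ℝ) l, θ x * (β' x)ᴴ = 0 := by
    intro x hx
    have hββ' : β x * (β' x)ᴴ = 0 := by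
      have := congrArg conjTranspose (hβ'β x hx)
      simpa [conjTranspose_mul] using this
    rw [hθeq x hx, Matrix.mul_assoc, hββ', Matrix.mul_zero]
  -- θ'βᴴ = 0
  have hθ'β : ∀ x ∈ Set.Icc (0:ℝ) l, θ' x * (β x)ᴴ = 0 := by
    intro x hx
    have := congrArg conjTranspose (hβθ' x hx)
    simpa [conjTranspose_mul] using this
  -- f = θβᴴ has zero derivative, hence is constant
  have hconst : ∀ x ∈ Set.Icc (0:ℝ) l, ∀ a b,
      (θ x * (β x)ᴴ) a b = (θ 0 * (β 0)ᴴ) a b := by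
    intro x hx a b
    have hderiv : ∀ y ∈ Set.Icc (0:ℝ) l,
        HasDerivWithinAt (fun s => (θ s * (β s)ᴴ) a b)
          ((0 : ℝ → ℂ) y) (Set.Icc 0 l) y := by
      intro y hy
      have hD : HasDerivWithinAt (fun s => ∑ j, θ s a j * star (β s b j))
          (∑ j, (θ' y a j * star (β y b j) + θ y a j * star (β' y b j)))
          (Set.Icc 0 l) y := by
        apply HasDerivWithinAt.fun_sum
        intro j _
        exact (hθd y hy a j).mul ((hβd y hy b j).star)
      have hDval : (∑ j, (θ' y a j * star (β y b j) + θ y a j * star (β' y b j))) = 0 := by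
        have h1 : (θ' y * (β y)ᴴ) a b + (θ y * (β' y)ᴴ) a b
            = ∑ j, (θ' y a j * star (β y b j) + θ y a j * star (β' y b j)) := by
          simp [Matrix.mul_apply, Matrix.conjTranspose_apply, Finset.sum_add_distrib]
        rw [← h1, hθ'β y hy, hθβ' y hy]
        simp
      have : (fun s => (θ s * (β s)ᴴ) a b) = fun s => ∑ j, θ s a j * star (β s b j) := by
        funext s
        simp [Matrix.mul_apply, Matrix.conjTranspose_apply]
      rw [this]
      show HasDerivWithinAt _ (0:ℂ) (Set.Icc 0 l) y
      exact hDval ▸ hD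
    have hbound : ∀ y ∈ Set.Icc (0:ℝ) l, ‖(0 : ℝ → ℂ) y‖ ≤ (0:ℝ) := by
      intro y _; simp
    have := (convex_Icc (0:ℝ) l).norm_image_sub_le_of_norm_hasDerivWithin_le
      hderiv hbound h0mem hx
    simp only [Pi.zero_apply, norm_zero, zero_mul] at this
    have h3 : ‖(θ x * (β x)ᴴ) a b - (θ 0 * (β 0)ᴴ) a b‖ = 0 :=
      le_antisymm this (norm_nonneg _)
    exact sub_eq_zero.mp (norm_eq_zero.mp h3)
  -- conclude
  intro x hx
  have hf0 : θ 0 * (β 0)ᴴ = 1 := by rw [h0]; exact hββ 0 h0mem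
  have hfx : θ x * (β x)ᴴ = 1 := by
    ext a b
    rw [hconst x hx a b, hf0]
  rw [hθeq x hx, hfx, Matrix.one_mul]
end
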